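/- arXiv:1503.08451 — 2 statements merged into one kernel-verified Lean document; each statement's English description precedes it below -/
import Mathlib

section
/- Let S be a nonempty strong-inductive cubical set in the n-dimensional cube B_n. Then the cohomology of the dual cochain complex S* satisfies H^0(S) ≅ ℤ/2ℤ and H^i(S) = 0 for all i > 0. -/
/-- A face of the `n`-dimensional cube: a function `Fin n → Fin 3`,
where `0` stands for `0`, `1` stands for `*`, and `2` stands for `1`. -/
abbrev Face (n : ℕ) := Fin n → Fin 3

/-- The dimension of a face: the number of indices mapped to `*` (encoded as `1 : Fin 3`). -/
def fdim {n : ℕ} (f : Face n) : ℕ := (Finset.univ.filter fun i => f i = 1).card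

/-- `Adj f g` : the face `g` appears in the boundary `∂ f`, i.e. `g` is obtained from `f`
by replacing a single occurrence of `*` by `0` or by `1`. -/
def Adj {n : ℕ} (f g : Face n) : Prop :=
  ∃ i, f i = 1 ∧ g i ≠ 1 ∧ ∀ j, j ≠ i → g j = f j

instance {n : ℕ} (f g : Face n) : Decidable (Adj f g) := by unfold Adj; infer_instance

/-- A cubical set is inductive if it is downward closed for the pointwise order
induced by `0 < * < 1`. -/
def Inductive {n : ℕ} (S : Finset (Face n)) : Prop :=
  ∀ f ∈ S, ∀ f' : Face n, (∀ i, f' i ≤ f i) → f' ∈ S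

/-- Strong-inductive: inductive, and every maximal face has dimension `0`. -/
def StrongInductive {n : ℕ} (S : Finset (Face n)) : Prop :=
  Inductive S ∧ ∀ f ∈ S, (∀ g ∈ S, (∀ i, f i ≤ g i) → g = f) → fdim f = 0

/-- The degree-`k` part of the chain complex of the cubical set `S` over `ℤ/2ℤ`:
the `ℤ/2ℤ`-vector space with basis the faces of `S` of dimension `k`. -/
abbrev Chain {n : ℕ} (S : Finset (Face n)) (k : ℕ) : Type :=
  {f : Face n // f ∈ S ∧ fdim f = k} → ZMod 2

/-- The boundary map `∂ : Chain S k → Chain S (k-1)`: a basis face is sent to the sum of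
the faces appearing in its boundary. -/
noncomputable def bd {n : ℕ} (S : Finset (Face n)) (k : ℕ) :
    Chain S k →ₗ[ZMod 2] Chain S (k - 1) :=
  Matrix.mulVecLin
    (Matrix.of fun (g : {f : Face n // f ∈ S ∧ fdim f = k - 1})
      (f : {f : Face n // f ∈ S ∧ fdim f = k}) => if Adj f.1 g.1 then (1 : ZMod 2) else 0)

/-- The degree-`k` homology of the chain complex `(S, ∂)`:
`ker ∂_k` modulo (the pullback of) `im ∂_{k+1}`. -/
abbrev CubeHomology {n : ℕ} (S : Finset (Face n)) (k : ℕ) : Type :=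
  LinearMap.ker (bd S k) ⧸
    Submodule.comap (LinearMap.ker (bd S k)).subtype (LinearMap.range (bd S (k + 1)))

/-- The degree-`k` cohomology of the dual cochain complex `S* = Hom(S, ℤ/2ℤ)` with
differential `∂*` dual to `∂`: `ker ((∂_{k+1})*) ⧸ im ((∂_k)*)`. -/
abbrev CubeCohomology {n : ℕ} (S : Finset (Face n)) (k : ℕ) : Type :=
  LinearMap.ker (LinearMap.dualMap (bd S (k + 1))) ⧸
    (Submodule.comap (LinearMap.ker (LinearMap.dualMap (bd S (k + 1)))).subtype
        (LinearMap.range (LinearMap.dualMap (bd S k)))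
      : Submodule (ZMod 2) ↥(LinearMap.ker (LinearMap.dualMap (bd S (k + 1)))))

/-- Auxiliary homotopy adjacency: `g` is a term of `h(f)` for the standard cubical
contraction onto the all-zeros vertex. -/
def HAdj {n : ℕ} (f g : Face n) : Prop :=
  ∃ i, f i = 2 ∧ g i = 1 ∧ (∀ j, j < i → f j ≠ 1 ∧ g j = 0) ∧ (∀ j, i < j → g j = f j)

instance {n : ℕ} (f g : Face n) : Decidable (HAdj f g) := by unfold HAdj; infer_instance

def v0 (n : ℕ) : Face n := fun _ => 0

lemma fdim_eq_zero_iff {n : ℕ} {f : Face n} : fdim f = 0 ↔ ∀ i, f i ≠ 1 := by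
  simp [fdim, Finset.card_eq_zero, Finset.filter_eq_empty_iff]

lemma fdim_v0 (n : ℕ) : fdim (v0 n) = 0 := by
  rw [fdim_eq_zero_iff]; intro i; simp [v0]

lemma HAdj.le {n : ℕ} {f g : Face n} (h : HAdj f g) : ∀ i, g i ≤ f i := by
  obtain ⟨i, hfi, hgi, hlt, hgt⟩ := h
  intro j
  rcases lt_trichotomy j i with hj | hj | hj
  · rw [(hlt j hj).2]; exact Fin.zero_le _
  · subst hj; rw [hfi, hgi]; decide
  · rw [hgt j hj]

lemma hadj_fdim {n : ℕ} {f g : Face n} (h : HAdj f g) : fdim g = fdim f + 1 := by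
  obtain ⟨i, hfi, hgi, hlt, hgt⟩ := h
  have hset : (Finset.univ.filter fun j => g j = 1) =
      insert i (Finset.univ.filter fun j => f j = 1) := by
    ext j
    simp only [Finset.mem_filter, Finset.mem_univ, true_and, Finset.mem_insert]
    rcases lt_trichotomy j i with hj | hj | hj
    · constructor
      · intro hgj; exact absurd hgj (by rw [(hlt j hj).2]; decide)
      · rintro (rfl | hfj)
        · exact absurd hj (lt_irrefl _)
        · exact absurd hfj (hlt j hj).1
    · subst hj
      constructor
      · intro _; exact Or.inl rfl
      · intro _; exact hgi
    · rw [hgt j hj]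
      constructor
      · intro h'; exact Or.inr h'
      · rintro (rfl | hfj)
        · exact absurd hj (lt_irrefl _)
        · exact hfj
  have hnotmem : i ∉ (Finset.univ.filter fun j => f j = 1) := by
    simp only [Finset.mem_filter, Finset.mem_univ, true_and]
    rw [hfi]; decide
  unfold fdim
  rw [hset, Finset.card_insert_of_notMem hnotmem, Nat.add_comm]

lemma adj_fdim {n : ℕ} {f g : Face n} (h : Adj f g) : fdim f = fdim g + 1 := by
  obtain ⟨i, hfi, hgi, hoff⟩ := h
  have hset : (Finset.univ.filter fun j => f j = 1) =
      insert i (Finset.univ.filter fun j => g j = 1) := by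
    ext j
    simp only [Finset.mem_filter, Finset.mem_univ, true_and, Finset.mem_insert]
    rcases eq_or_ne j i with rfl | hj
    · exact ⟨fun _ => Or.inl rfl, fun _ => hfi⟩
    · rw [← hoff j hj]
      exact ⟨fun h' => Or.inr h', fun h' => h'.elim (fun h'' => absurd h'' hj) id⟩
  have hnotmem : i ∉ (Finset.univ.filter fun j => g j = 1) := by
    simp only [Finset.mem_filter, Finset.mem_univ, true_and]; exact hgi
  unfold fdim
  rw [hset, Finset.card_insert_of_notMem hnotmem, Nat.add_comm]
lemma v0_mem {n : ℕ} {S : Finset (Face n)} (hne : S.Nonempty) (hS : StrongInductive S) :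
    v0 n ∈ S := by
  obtain ⟨f, hf⟩ := hne
  exact hS.1 f hf (v0 n) (fun i => Fin.zero_le _)

lemma exists_vertex_above {n : ℕ} {S : Finset (Face n)} (hS : StrongInductive S)
    {f : Face n} (hf : f ∈ S) : ∃ w ∈ S, (∀ i, f i ≤ w i) ∧ fdim w = 0 := by
  classical
  obtain ⟨m, hm, hmax⟩ : ∃ m ∈ (S.filter fun g => ∀ i, f i ≤ g i),
      ∀ x ∈ (S.filter fun g => ∀ i, f i ≤ g i), ¬ m < x :=
    (Finset.exists_maximal (s := S.filter fun g => ∀ i, f i ≤ g i)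
    ⟨f, by simp [hf]⟩).elim fun m hm => ⟨m, hm.1, fun x hx hlt => hlt.not_ge (hm.2 hx hlt.le)⟩
  simp only [Finset.mem_filter] at hm
  refine ⟨m, hm.1, hm.2, hS.2 m hm.1 ?_⟩
  intro g hg hmg
  have hgfilter : g ∈ S.filter fun g => ∀ i, f i ≤ g i := by
    simp only [Finset.mem_filter]
    exact ⟨hg, fun i => le_trans (hm.2 i) (hmg i)⟩
  have hnlt := hmax g hgfilter
  have hle : m ≤ g := fun i => hmg i
  have : g ≤ m := by
    by_contra hc
    exact hnlt (lt_of_le_not_ge hle hc)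
  exact le_antisymm this hle

lemma fin3_eq_two {x : Fin 3} (h1 : (1 : Fin 3) ≤ x) (h2 : x ≠ 1) : x = 2 := by
  revert h1 h2; revert x; decide

lemma mem_of_adj {n : ℕ} {S : Finset (Face n)} (hS : StrongInductive S)
    {f g : Face n} (hf : f ∈ S) (h : Adj f g) : g ∈ S := by
  obtain ⟨w, hw, hfw, hw0⟩ := exists_vertex_above hS hf
  obtain ⟨i, hfi, hgi, hoff⟩ := h
  apply hS.1 w hw
  intro j
  rcases eq_or_ne j i with rfl | hj
  · have h1 : (1 : Fin 3) ≤ w j := hfi ▸ hfw j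
    have h2 : w j ≠ 1 := fdim_eq_zero_iff.mp hw0 j
    rw [fin3_eq_two h1 h2]
    revert hgi; generalize g j = x; revert x; decide
  · rw [hoff j hj]; exact hfw j

lemma mem_of_hadj {n : ℕ} {S : Finset (Face n)} (hS : StrongInductive S)
    {f g : Face n} (hf : f ∈ S) (h : HAdj f g) : g ∈ S :=
  hS.1 f hf g h.le
lemma adj_cons {n : ℕ} (a b : Fin 3) (f g : Face n) :
    Adj (Fin.cons a f) (Fin.cons b g) ↔ (a = 1 ∧ b ≠ 1 ∧ g = f) ∨ (b = a ∧ Adj f g) := by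
  constructor
  · rintro ⟨i, h1, h2, h3⟩
    induction i using Fin.cases with
    | zero =>
      left
      refine ⟨by simpa using h1, by simpa using h2, funext fun j => ?_⟩
      simpa using h3 j.succ (Fin.succ_ne_zero j)
    | succ i =>
      right
      refine ⟨by simpa using h3 0 (Fin.succ_ne_zero i).symm, i, by simpa using h1,
        by simpa using h2, fun j hj => ?_⟩
      simpa using h3 j.succ (by simpa [Fin.succ_inj] using hj)
  · rintro (⟨ha, hb, rfl⟩ | ⟨hb, i, h1, h2, h3⟩)
    · refine ⟨0, by simpa using ha, by simpa using hb, fun j hj => ?_⟩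
      induction j using Fin.cases with
      | zero => exact absurd rfl hj
      | succ j => simp
    · refine ⟨i.succ, by simpa using h1, by simpa using h2, fun j hj => ?_⟩
      induction j using Fin.cases with
      | zero => simpa using hb
      | succ j => simpa using h3 j (by simpa [Fin.succ_inj] using hj)

lemma hadj_cons {n : ℕ} (a b : Fin 3) (f g : Face n) :
    HAdj (Fin.cons a f) (Fin.cons b g) ↔
      (a = 2 ∧ b = 1 ∧ g = f) ∨ (a ≠ 1 ∧ b = 0 ∧ HAdj f g) := by
  constructor
  · rintro ⟨i, h1, h2, h3, h4⟩
    induction i using Fin.cases with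
    | zero =>
      left
      refine ⟨by simpa using h1, by simpa using h2, funext fun j => ?_⟩
      simpa using h4 j.succ (Fin.succ_pos j)
    | succ i =>
      right
      have h0 := h3 0 (Fin.succ_pos i)
      refine ⟨by simpa using h0.1, by simpa using h0.2, i, by simpa using h1,
        by simpa using h2, fun j hj => ?_, fun j hj => ?_⟩
      · have := h3 j.succ (by simpa [Fin.succ_lt_succ_iff] using hj)
        simpa using this
      · simpa using h4 j.succ (by simpa [Fin.succ_lt_succ_iff] using hj)
  · rintro (⟨ha, hb, rfl⟩ | ⟨ha, hb, i, h1, h2, h3, h4⟩)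
    · refine ⟨0, by simpa using ha, by simpa using hb, fun j hj => absurd hj (Fin.not_lt_zero j),
        fun j hj => ?_⟩
      induction j using Fin.cases with
      | zero => exact absurd hj (lt_irrefl _)
      | succ j => simp
    · refine ⟨i.succ, by simpa using h1, by simpa using h2, fun j hj => ?_, fun j hj => ?_⟩
      · induction j using Fin.cases with
        | zero => exact ⟨by simpa using ha, by simpa using hb⟩
        | succ j =>
          have := h3 j (by simpa [Fin.succ_lt_succ_iff] using hj)
          simpa using this
      · induction j using Fin.cases with
        | zero => exact absurd hj (by simp)
        | succ j => simpa using h4 j (by simpa [Fin.succ_lt_succ_iff] using hj)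

lemma fdim_cons {n : ℕ} (a : Fin 3) (f : Face n) :
    fdim (Fin.cons a f) = (if a = 1 then 1 else 0) + fdim f := by
  unfold fdim
  rw [Finset.card_filter, Finset.card_filter, Fin.sum_univ_succ]
  simp

lemma v0_succ (n : ℕ) : v0 (n + 1) = Fin.cons 0 (v0 n) := by
  funext j
  induction j using Fin.cases with
  | zero => simp [v0]
  | succ j => simp [v0]

lemma sum_face_succ {n : ℕ} {M : Type*} [AddCommMonoid M] (F : Face (n + 1) → M) :
    ∑ g : Face (n + 1), F g = ∑ b : Fin 3, ∑ gt : Face n, F (Fin.cons b gt) := by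
  rw [← Equiv.sum_comp (Fin.consEquiv (fun _ : Fin (n+1) => Fin 3)) F, Fintype.sum_prod_type]
  rfl
lemma card_filter_eq_left {α : Type*} [Fintype α] [DecidableEq α] (y : α) (P : α → Prop)
    [DecidablePred P] :
    (Finset.filter (fun x => x = y ∧ P x) Finset.univ).card = if P y then 1 else 0 := by
  rcases em (P y) with h | h
  · rw [if_pos h]
    have he : Finset.filter (fun x => x = y ∧ P x) Finset.univ = {y} := by
      ext x
      simp only [Finset.mem_filter, Finset.mem_univ, true_and, Finset.mem_singleton]
      exact ⟨And.left, fun hx => ⟨hx, hx ▸ h⟩⟩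
    rw [he, Finset.card_singleton]
  · rw [if_neg h, Finset.card_eq_zero.mpr]
    rw [Finset.filter_eq_empty_iff]
    rintro x - ⟨rfl, hP⟩
    exact h hP

lemma card_filter_eq_right {α : Type*} [Fintype α] [DecidableEq α] (z : α) (P : α → Prop)
    [DecidablePred P] :
    (Finset.filter (fun x => P x ∧ z = x) Finset.univ).card = if P z then 1 else 0 := by
  rcases em (P z) with h | h
  · rw [if_pos h]
    have he : Finset.filter (fun x => P x ∧ z = x) Finset.univ = {z} := by
      ext x
      simp only [Finset.mem_filter, Finset.mem_univ, true_and, Finset.mem_singleton]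
      exact ⟨fun hx => hx.2.symm, fun hx => ⟨hx ▸ h, hx.symm⟩⟩
    rw [he, Finset.card_singleton]
  · rw [if_neg h, Finset.card_eq_zero.mpr]
    rw [Finset.filter_eq_empty_iff]
    rintro x - ⟨hP, rfl⟩
    exact h hP

lemma z2_helper : ∀ x y z w : ZMod 2, x + y = z + w → x + z + y = w := by decide

set_option maxHeartbeats 1000000 in
lemma key_cons (n : ℕ)
    (ih : ∀ f f' : Face n,
      ((∑ g : Face n, if HAdj f g ∧ Adj g f' then (1 : ZMod 2) else 0) +
        ∑ g : Face n, if Adj f g ∧ HAdj g f' then (1 : ZMod 2) else 0) =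
      (if f' = f then 1 else 0) + (if fdim f = 0 ∧ f' = v0 n then 1 else 0))
    (a a' : Fin 3) (ft ft' : Face n) :
    ((∑ g : Face (n+1), if HAdj (Fin.cons a ft : Face (n+1)) g ∧ Adj g (Fin.cons a' ft' : Face (n+1)) then (1 : ZMod 2) else 0) +
      ∑ g : Face (n+1), if Adj (Fin.cons a ft : Face (n+1)) g ∧ HAdj g (Fin.cons a' ft' : Face (n+1)) then (1 : ZMod 2) else 0) =
    (if (Fin.cons a' ft' : Face (n+1)) = Fin.cons a ft then 1 else 0) +
      (if fdim (Fin.cons a ft : Face (n+1)) = 0 ∧ (Fin.cons a' ft' : Face (n+1)) = v0 (n+1) then 1 else 0) := by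
  rw [sum_face_succ, sum_face_succ]
  simp only [hadj_cons, adj_cons, Fin.cons_inj, fdim_cons, v0_succ]
  fin_cases a <;> fin_cases a'
  · simpa [Fin.sum_univ_three] using ih ft ft'
  · simp [Fin.sum_univ_three]
  · simp [Fin.sum_univ_three]
  · simp [Fin.sum_univ_three, CharTwo.add_self_eq_zero]
  · simp [Fin.sum_univ_three, card_filter_eq_left, card_filter_eq_right]
  · simp [Fin.sum_univ_three, CharTwo.add_self_eq_zero]
  · -- a = 2, a' = 0 : uses ih
    have H := ih ft ft'
    simp only [Finset.sum_boole] at H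
    simp only [Fin.sum_univ_three]
    simp [card_filter_eq_left, card_filter_eq_right]
    exact z2_helper _ _ _ _ H
  · simp [Fin.sum_univ_three, card_filter_eq_left, card_filter_eq_right,
      CharTwo.add_self_eq_zero]
  · simp [Fin.sum_univ_three, card_filter_eq_left, card_filter_eq_right]

lemma key (n : ℕ) (f f' : Face n) :
    ((∑ g : Face n, if HAdj f g ∧ Adj g f' then (1 : ZMod 2) else 0) +
      ∑ g : Face n, if Adj f g ∧ HAdj g f' then (1 : ZMod 2) else 0) =
    (if f' = f then 1 else 0) + (if fdim f = 0 ∧ f' = v0 n then 1 else 0) := by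
  induction n with
  | zero =>
    have h1 : f' = f := funext fun i => i.elim0
    have h4 : f = v0 0 := funext fun i => i.elim0
    have h3 : fdim f = 0 := by rw [fdim_eq_zero_iff]; intro i; exact i.elim0
    have hH : ∀ g : Face 0, ¬ HAdj f g := by rintro g ⟨i, _⟩; exact i.elim0
    have hA : ∀ g : Face 0, ¬ Adj f g := by rintro g ⟨i, _⟩; exact i.elim0
    simp [h1, h4, h3, hH, hA]
    decide
  | succ n ih =>
    rw [← Fin.cons_self_tail f, ← Fin.cons_self_tail f']
    exact key_cons n ih _ _ _ _
lemma sum_subtype_eq_sum {n : ℕ} {S : Finset (Face n)} {m : ℕ} (w : Face n → ZMod 2)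
    (hw : ∀ g, w g ≠ 0 → g ∈ S ∧ fdim g = m) :
    (∑ g : {f : Face n // f ∈ S ∧ fdim f = m}, w g.1) = ∑ g : Face n, w g := by
  rw [← Finset.sum_subtype (Finset.univ.filter fun g => g ∈ S ∧ fdim g = m) (by simp) w]
  exact Finset.sum_filter_of_ne (fun x _ h => hw x h)

noncomputable def Bmat {n : ℕ} (S : Finset (Face n)) (k : ℕ) :
    Matrix {f : Face n // f ∈ S ∧ fdim f = k} {f : Face n // f ∈ S ∧ fdim f = k + 1} (ZMod 2) :=
  Matrix.of fun g f => if Adj f.1 g.1 then (1 : ZMod 2) else 0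

lemma bd_succ_apply {n : ℕ} (S : Finset (Face n)) (k : ℕ) (c : Chain S (k + 1)) :
    bd S (k + 1) c = (Bmat S k).mulVec c := rfl

noncomputable def Hmat {n : ℕ} (S : Finset (Face n)) (k : ℕ) :
    Matrix {f : Face n // f ∈ S ∧ fdim f = k + 1} {f : Face n // f ∈ S ∧ fdim f = k} (ZMod 2) :=
  Matrix.of fun g f => if HAdj f.1 g.1 then (1 : ZMod 2) else 0

noncomputable def Hmap {n : ℕ} (S : Finset (Face n)) (k : ℕ) :
    Chain S k →ₗ[ZMod 2] Chain S (k + 1) := (Hmat S k).mulVecLin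

lemma not_adj_of_fdim_zero {n : ℕ} {f g : Face n} (h : fdim f = 0) : ¬ Adj f g := by
  rintro ⟨i, hfi, -, -⟩
  exact fdim_eq_zero_iff.mp h i hfi

/-- Entrywise chain homotopy identity, for faces of `S` of dimension `k`. -/
lemma entry_homotopy {n : ℕ} {S : Finset (Face n)} (hS : StrongInductive S) (k : ℕ)
    (f f' : {f : Face n // f ∈ S ∧ fdim f = k}) :
    ((∑ g : {f : Face n // f ∈ S ∧ fdim f = k + 1},
        (if Adj g.1 f'.1 then (1 : ZMod 2) else 0) * (if HAdj f.1 g.1 then 1 else 0)) +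
      ∑ g : {f : Face n // f ∈ S ∧ fdim f = k - 1},
        (if HAdj g.1 f'.1 then (1 : ZMod 2) else 0) * (if Adj f.1 g.1 then 1 else 0)) =
    (if f'.1 = f.1 then 1 else 0) + (if fdim f.1 = 0 ∧ f'.1 = v0 n then 1 else 0) := by
  have e1 : (∑ g : {f : Face n // f ∈ S ∧ fdim f = k + 1},
      (if Adj g.1 f'.1 then (1 : ZMod 2) else 0) * (if HAdj f.1 g.1 then 1 else 0)) =
      ∑ g : Face n, if HAdj f.1 g ∧ Adj g f'.1 then (1 : ZMod 2) else 0 := by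
    rw [sum_subtype_eq_sum (fun g => (if Adj g f'.1 then (1 : ZMod 2) else 0) *
        (if HAdj f.1 g then 1 else 0))]
    · exact Finset.sum_congr rfl fun g _ => by
        by_cases h1 : HAdj f.1 g <;> by_cases h2 : Adj g f'.1 <;> simp [h1, h2]
    · intro g hg
      have h1 : HAdj f.1 g := by
        by_contra h; simp [h] at hg
      refine ⟨mem_of_hadj hS f.2.1 h1, ?_⟩
      rw [hadj_fdim h1, f.2.2]
  have e2 : (∑ g : {f : Face n // f ∈ S ∧ fdim f = k - 1},
      (if HAdj g.1 f'.1 then (1 : ZMod 2) else 0) * (if Adj f.1 g.1 then 1 else 0)) =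
      ∑ g : Face n, if Adj f.1 g ∧ HAdj g f'.1 then (1 : ZMod 2) else 0 := by
    rw [sum_subtype_eq_sum (fun g => (if HAdj g f'.1 then (1 : ZMod 2) else 0) *
        (if Adj f.1 g then 1 else 0))]
    · exact Finset.sum_congr rfl fun g _ => by
        by_cases h1 : Adj f.1 g <;> by_cases h2 : HAdj g f'.1 <;> simp [h1, h2]
    · intro g hg
      have h1 : Adj f.1 g := by
        by_contra h; simp [h] at hg
      refine ⟨mem_of_adj hS f.2.1 h1, ?_⟩
      have := adj_fdim h1
      rw [f.2.2] at this
      omega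
  rw [e1, e2, key]
section Homotopy

variable {n : ℕ} {S : Finset (Face n)}

lemma matrix_homotopy_pos (hS : StrongInductive S) (j : ℕ) :
    Bmat S (j + 1) * Hmat S (j + 1) + Hmat S j * Bmat S j = 1 := by
  ext f' f
  rw [Matrix.add_apply, Matrix.mul_apply, Matrix.mul_apply, Matrix.one_apply]
  have h := entry_homotopy hS (j + 1) f f'
  have hd : ¬ (fdim f.1 = 0 ∧ f'.1 = v0 n) := by
    rintro ⟨h0, -⟩
    rw [f.2.2] at h0
    exact Nat.succ_ne_zero _ h0
  rw [if_neg hd, add_zero] at h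
  have hcoe : (if f'.1 = f.1 then (1 : ZMod 2) else 0) = if f' = f then 1 else 0 := by
    simp [Subtype.ext_iff]
  rw [hcoe] at h
  exact h

noncomputable def Emat {n : ℕ} (S : Finset (Face n)) :
    Matrix {f : Face n // f ∈ S ∧ fdim f = 0} {f : Face n // f ∈ S ∧ fdim f = 0} (ZMod 2) :=
  Matrix.of fun g _f => if g.1 = v0 n then (1 : ZMod 2) else 0

lemma matrix_homotopy_zero (hS : StrongInductive S) :
    Bmat S 0 * Hmat S 0 = 1 + Emat S := by
  ext f' f
  rw [Matrix.add_apply, Matrix.mul_apply, Matrix.one_apply]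
  have h := entry_homotopy hS 0 f f'
  have h2 : (∑ g : {f : Face n // f ∈ S ∧ fdim f = 0 - 1},
      (if HAdj g.1 f'.1 then (1 : ZMod 2) else 0) * (if Adj f.1 g.1 then 1 else 0)) = 0 := by
    apply Finset.sum_eq_zero
    intro g _
    rw [if_neg (not_adj_of_fdim_zero f.2.2), mul_zero]
  rw [h2, add_zero] at h
  have hd : (if fdim f.1 = 0 ∧ f'.1 = v0 n then (1 : ZMod 2) else 0) =
      if f'.1 = v0 n then 1 else 0 := by
    simp [f.2.2]
  rw [hd] at h
  have hcoe : (if f'.1 = f.1 then (1 : ZMod 2) else 0) = if f' = f then 1 else 0 := by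
    simp [Subtype.ext_iff]
  rw [hcoe] at h
  exact h

lemma homotopy_pos_apply (hS : StrongInductive S) (j : ℕ) (c : Chain S (j + 1)) :
    (Bmat S (j + 1)).mulVec ((Hmat S (j + 1)).mulVec c) +
      (Hmat S j).mulVec ((Bmat S j).mulVec c) = c := by
  rw [Matrix.mulVec_mulVec, Matrix.mulVec_mulVec, ← Matrix.add_mulVec,
    matrix_homotopy_pos hS j, Matrix.one_mulVec]

lemma homotopy_zero_apply (hS : StrongInductive S) (c : Chain S 0) :
    (Bmat S 0).mulVec ((Hmat S 0).mulVec c) = c + (Emat S).mulVec c := by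
  rw [Matrix.mulVec_mulVec, matrix_homotopy_zero hS, Matrix.add_mulVec, Matrix.one_mulVec]

end Homotopy
section Assembly

variable {n : ℕ} {S : Finset (Face n)}

lemma char2_shift {M : Type*} [AddCommGroup M] [Module (ZMod 2) M] {a b c : M}
    (h : a + b = c) : b = c + a := by
  have hneg : -a = a := by
    rw [← neg_one_smul (ZMod 2) a, show (-1 : ZMod 2) = 1 by decide, one_smul]
  have h2 : a + a = 0 := by nth_rewrite 2 [← hneg]; exact add_neg_cancel a
  calc b = b + (a + a) := by rw [h2, add_zero]
    _ = c + a := by rw [← h]; abel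

lemma two_boundary (hS : StrongInductive S) (f : Face n) (hf : f ∈ S) (h1 : fdim f = 1) :
    (∑ g : {f : Face n // f ∈ S ∧ fdim f = 0}, if Adj f g.1 then (1 : ZMod 2) else 0) = 0 := by
  have hsupp : ∀ g : Face n, (if Adj f g then (1 : ZMod 2) else 0) ≠ 0 → g ∈ S ∧ fdim g = 0 := by
    intro g hg
    have h : Adj f g := by by_contra h; simp [h] at hg
    refine ⟨mem_of_adj hS hf h, ?_⟩
    have := adj_fdim h
    omega
  rw [sum_subtype_eq_sum (fun g => if Adj f g then (1 : ZMod 2) else 0) hsupp]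
  obtain ⟨i, hi⟩ := Finset.card_eq_one.mp h1
  have hfi : f i = 1 := by
    have : i ∈ Finset.univ.filter fun j => f j = 1 := by rw [hi]; exact Finset.mem_singleton_self i
    simpa using this
  have huniq : ∀ j, f j = 1 → j = i := by
    intro j hj
    have : j ∈ Finset.univ.filter fun j => f j = 1 := by simpa using hj
    rw [hi] at this
    simpa using this
  have hval : ∀ x : Fin 3, x ≠ 1 → x = 0 ∨ x = 2 := by decide
  have hset : Finset.univ.filter (fun g => Adj f g) =
      {Function.update f i 0, Function.update f i 2} := by
    ext g
    simp only [Finset.mem_filter, Finset.mem_univ, true_and, Finset.mem_insert,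
      Finset.mem_singleton]
    constructor
    · rintro ⟨i', hfi', hgi', hoff⟩
      have hii : i' = i := huniq i' hfi'
      subst hii
      have hg : g = Function.update f i' (g i') := by
        funext j
        rcases eq_or_ne j i' with rfl | hj
        · rw [Function.update_self]
        · rw [Function.update_of_ne hj, hoff j hj]
      rcases hval _ hgi' with h0 | h2
      · left; rw [hg, h0]
      · right; rw [hg, h2]
    · rintro (rfl | rfl)
      · exact ⟨i, hfi, by simp, fun j hj => Function.update_of_ne hj _ _⟩
      · exact ⟨i, hfi, by simp [show (2 : Fin 3) ≠ 1 by decide], fun j hj =>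
          Function.update_of_ne hj _ _⟩
  rw [Finset.sum_boole, hset]
  have hne : Function.update f i 0 ≠ Function.update f i 2 := by
    intro h
    have := congrFun h i
    simp at this
  rw [Finset.card_insert_of_notMem (by simpa using hne), Finset.card_singleton]
  decide

lemma bd_zero_eq : bd S 0 = 0 := by
  apply LinearMap.ext
  intro c
  funext g
  show (∑ f : {f : Face n // f ∈ S ∧ fdim f = 0},
    (if Adj f.1 g.1 then (1 : ZMod 2) else 0) * c f) = 0
  apply Finset.sum_eq_zero
  intro f _
  rw [if_neg (not_adj_of_fdim_zero f.2.2), zero_mul]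

end Assembly
set_option maxHeartbeats 2000000 in

/-- For a nonempty strong-inductive cubical set `S ⊆ B_n`, the cohomology of the dual
cochain complex `S*` satisfies `H⁰(S) ≅ ℤ/2ℤ` and `Hⁱ(S) = 0` for `i > 0`. -/
theorem statement1 (n : ℕ) (S : Finset (Face n)) (hne : S.Nonempty)
    (hS : StrongInductive S) :
    Nonempty (CubeCohomology S 0 ≃ₗ[ZMod 2] ZMod 2) ∧
      ∀ i : ℕ, 0 < i → Subsingleton (CubeCohomology S i) := by
  classical
  constructor
  · -- `H⁰(S) ≃ ℤ/2ℤ`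
    have hbot : (Submodule.comap (LinearMap.ker (LinearMap.dualMap (bd S (0 + 1)))).subtype
        (LinearMap.range (LinearMap.dualMap (bd S 0)))) = ⊥ := by
      have h0 : LinearMap.dualMap (bd S 0) = 0 := by
        rw [bd_zero_eq]
        apply LinearMap.ext; intro φ; apply LinearMap.ext; intro c
        simp
      rw [h0, LinearMap.range_zero, Submodule.comap_bot, Submodule.ker_subtype]
    set vert : {f : Face n // f ∈ S ∧ fdim f = 0} := ⟨v0 n, v0_mem hne hS, fdim_v0 n⟩ with hvert
    set δ : Chain S 0 := (fun f => if f = vert then 1 else 0) with hδ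
    set evmap : (LinearMap.ker (LinearMap.dualMap (bd S (0 + 1)))) →ₗ[ZMod 2] ZMod 2 :=
      { toFun := fun x => x.1 δ
        map_add' := fun x y => rfl
        map_smul' := fun m x => rfl } with hev
    have hinj : Function.Injective evmap := by
      rw [injective_iff_map_eq_zero]
      intro x hx
      have hxδ : x.1 δ = 0 := hx
      apply Subtype.ext
      apply LinearMap.ext
      intro c
      have hc := homotopy_zero_apply hS c
      have hc' : c = (Bmat S 0).mulVec ((Hmat S 0).mulVec c) + (Emat S).mulVec c := by
        have h' : (Emat S).mulVec c + c = (Bmat S 0).mulVec ((Hmat S 0).mulVec c) := by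
          rw [add_comm]; exact hc.symm
        exact char2_shift h'
      have hEc : (Emat S).mulVec c = (∑ f, c f) • δ := by
        funext g
        show (∑ f, (if g.1 = v0 n then (1 : ZMod 2) else 0) * c f) = ((∑ f, c f) • δ) g
        rcases eq_or_ne g.1 (v0 n) with hg | hg
        · have hgv : g = vert := Subtype.ext hg
          simp [hgv, hδ, hg, hvert]
        · have hgv : g ≠ vert := fun h => hg (by rw [h])
          simp [hδ, hg, hgv]
      have hk : x.1 ((Bmat S 0).mulVec ((Hmat S 0).mulVec c)) = 0 := by
        have hker := LinearMap.mem_ker.mp x.2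
        have heq : (Bmat S 0).mulVec ((Hmat S 0).mulVec c) = bd S (0 + 1) (Hmap S 0 c) := rfl
        rw [heq]
        have h5 : (LinearMap.dualMap (bd S (0 + 1)) x.1) (Hmap S 0 c) = 0 := by
          rw [hker]; rfl
        rw [LinearMap.dualMap_apply] at h5
        exact h5
      calc x.1 c = x.1 ((Bmat S 0).mulVec ((Hmat S 0).mulVec c)) + x.1 ((Emat S).mulVec c) := by
            rw [← map_add, ← hc']
        _ = 0 := by
            rw [hk, hEc, map_smul, hxδ, smul_zero, zero_add]
    set σmap : Chain S 0 →ₗ[ZMod 2] ZMod 2 :=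
      { toFun := fun c => ∑ f, c f
        map_add' := by intro a b; simp [Finset.sum_add_distrib]
        map_smul' := by intro m a; simp [Finset.mul_sum] } with hσ
    have hσker : σmap ∈ LinearMap.ker (LinearMap.dualMap (bd S (0 + 1))) := by
      rw [LinearMap.mem_ker]
      apply LinearMap.ext
      intro c
      show σmap (bd S (0 + 1) c) = 0
      have heq : bd S (0 + 1) c = (Bmat S 0).mulVec c := rfl
      rw [heq]
      show (∑ g, ∑ f, Bmat S 0 g f * c f) = 0
      rw [Finset.sum_comm]
      apply Finset.sum_eq_zero
      intro f _
      rw [← Finset.sum_mul]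
      have hb : (∑ g, Bmat S 0 g f) = 0 := two_boundary hS f.1 f.2.1 f.2.2
      rw [hb, zero_mul]
    have hσδ : σmap δ = 1 := by
      show (∑ f, δ f) = 1
      simp [hδ]
    have hsurj : Function.Surjective evmap := by
      intro z
      refine ⟨z • ⟨σmap, hσker⟩, ?_⟩
      show (z • σmap) δ = z
      rw [LinearMap.smul_apply, hσδ, smul_eq_mul, mul_one]
    exact ⟨(Submodule.quotEquivOfEqBot _ hbot).trans
      (LinearEquiv.ofBijective evmap ⟨hinj, hsurj⟩)⟩
  · intro i hi
    obtain ⟨j, rfl⟩ : ∃ j, i = j + 1 := ⟨i - 1, (Nat.succ_pred_eq_of_pos hi).symm⟩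
    apply Submodule.Quotient.subsingleton_iff.mpr
    rw [Submodule.eq_top_iff']
    intro x
    rw [Submodule.mem_comap]
    refine ⟨x.1.comp (Hmap S j), ?_⟩
    apply LinearMap.ext
    intro c
    rw [LinearMap.dualMap_apply]
    show x.1 (Hmap S j (bd S (j + 1) c)) = x.1 c
    have hc := homotopy_pos_apply hS j c
    have h1 : Hmap S j (bd S (j + 1) c) = (Hmat S j).mulVec ((Bmat S j).mulVec c) := rfl
    have h2 : (Hmat S j).mulVec ((Bmat S j).mulVec c) =
        @HAdd.hAdd (Chain S (j + 1)) (Chain S (j + 1)) (Chain S (j + 1)) _ c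
          ((Bmat S (j + 1)).mulVec ((Hmat S (j + 1)).mulVec c)) := char2_shift hc
    rw [h1, h2, map_add]
    have h3 : x.1 ((Bmat S (j + 1)).mulVec ((Hmat S (j + 1)).mulVec c)) = 0 := by
      have hker := LinearMap.mem_ker.mp x.2
      have h4 : (Bmat S (j + 1)).mulVec ((Hmat S (j + 1)).mulVec c) =
          bd S (j + 1 + 1) (Hmap S (j + 1) c) := rfl
      rw [h4]
      have h5 : (LinearMap.dualMap (bd S (j + 1 + 1)) x.1) (Hmap S (j + 1) c) = 0 := by
        rw [hker]; rfl
      rw [LinearMap.dualMap_apply] at h5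
      exact h5
    rw [h3, add_zero]
end

section
/- Let S be a strong-inductive cubical set in B_n, R a unital ring, and (C,d) an S-shaped pre-complex over R. Then there exists a sign assignment δ on S such that every square of the δ-deformation C^δ anticommutes, i.e., for every square s of S the two compositions of the maps d^δ along the two pairs of boundary edges of s are negatives of each other. -/
/-- Replace every `*` (encoded `1`) of a face by the value `a`.
For an edge `e`, `vset e 0` and `vset e 2` are its two endpoint vertices `e₀` and `e₁`. -/
def vset {n : ℕ} (f : Face n) (a : Fin 3) : Face n := fun l => if f l = 1 then a else f l

/-- `corner0 s i a` : replace every `*` of `s` by `0`, then set coordinate `i` to `a`. -/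
def corner0 {n : ℕ} (s : Face n) (i : Fin n) (a : Fin 3) : Face n :=
  Function.update (vset s 0) i a

/-- `corner2 s i a` : replace every `*` of `s` by `1` (encoded `2`), then set coordinate
`i` to `a`. -/
def corner2 {n : ℕ} (s : Face n) (i : Fin n) (a : Fin 3) : Face n :=
  Function.update (vset s 2) i a

/-- An `S`-shaped space over a unital ring `R`: an `R`-module `C v` for each vertex `v`,
and a linear map `d u w : C u → C w` for each pair of vertices. Only the values of `d` on
the pairs `(e₀, e₁)` coming from edges `e` of `S` are relevant. -/
structure SShape (R : Type*) [Ring R] (n : ℕ) where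
  C : Face n → Type*
  [acg : ∀ f, AddCommGroup (C f)]
  [mod : ∀ f, Module R (C f)]
  d : ∀ u w : Face n, C u →ₗ[R] C w

attribute [instance] SShape.acg SShape.mod

/-- Multiply a linear map by the sign `(−1)^a` for `a : ℤ/2ℤ`. -/
def signed {R : Type*} [Ring R] (a : ZMod 2) {M N : Type*} [AddCommGroup M] [AddCommGroup N]
    [Module R M] [Module R N] (f : M →ₗ[R] N) : M →ₗ[R] N :=
  if a = 0 then f else -f

/-- For a square `s` with `*` at the positions `i` and `j`, the composition
`C_{s[i→0,j→0]} → C_{s[i→1,j→0]} → C_{s[i→1,j→1]}` going first along direction `i`. -/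
def sqComp {R : Type*} [Ring R] {n : ℕ} (X : SShape R n) (s : Face n) (i : Fin n) :
    X.C (vset s 0) →ₗ[R] X.C (vset s 2) :=
  (X.d (corner0 s i 2) (vset s 2)).comp (X.d (vset s 0) (corner0 s i 2))

/-- The same composition for the `δ`-deformation `C^δ`: each leg is multiplied by the sign
`(−1)^{δ(e)}` of the corresponding boundary edge `e` of the square `s` (the edge of the
first leg is `corner0 s i 1`, the edge of the second leg is `corner2 s j 1`). -/
def sqCompSigned {R : Type*} [Ring R] {n : ℕ} (X : SShape R n) (δ : Face n → ZMod 2)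
    (s : Face n) (i j : Fin n) : X.C (vset s 0) →ₗ[R] X.C (vset s 2) :=
  (signed (δ (corner2 s j 1)) (X.d (corner0 s i 2) (vset s 2))).comp
    (signed (δ (corner0 s i 1)) (X.d (vset s 0) (corner0 s i 2)))

/-- `(u, w)` is the pair of endpoints of an edge of `S`. -/
def EdgePair {n : ℕ} (S : Finset (Face n)) (u w : Face n) : Prop :=
  ∃ e ∈ S, fdim e = 1 ∧ vset e 0 = u ∧ vset e 2 = w

/-- An `S`-shaped space is an `S`-shaped pre-complex if every square of `S` commutes or
anticommutes, and twice any composition of three maps `d` along composable edges of `S`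
is nonzero. -/
def IsPreComplex {R : Type*} [Ring R] {n : ℕ} (S : Finset (Face n)) (X : SShape R n) :
    Prop :=
  (∀ s ∈ S, fdim s = 2 → ∀ i j : Fin n, i ≠ j → s i = 1 → s j = 1 →
      sqComp X s i = sqComp X s j ∨ sqComp X s i = -sqComp X s j) ∧
  (∀ u₀ u₁ u₂ u₃ : Face n, EdgePair S u₀ u₁ → EdgePair S u₁ u₂ → EdgePair S u₂ u₃ →
      (2 : ℕ) • ((X.d u₂ u₃).comp ((X.d u₁ u₂).comp (X.d u₀ u₁))) ≠ 0)

section Aux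

open Finset

variable {n : ℕ}

lemma fin3_cases (a : Fin 3) : a = 0 ∨ a = 1 ∨ a = 2 := by omega

lemma signed_zero {R : Type*} [Ring R] {M N : Type*} [AddCommGroup M] [AddCommGroup N]
    [Module R M] [Module R N] (f : M →ₗ[R] N) : signed (0 : ZMod 2) f = f := if_pos rfl

lemma signed_one {R : Type*} [Ring R] {M N : Type*} [AddCommGroup M] [AddCommGroup N]
    [Module R M] [Module R N] (f : M →ₗ[R] N) : signed (1 : ZMod 2) f = -f := if_neg (by decide)

lemma signed_signed {R : Type*} [Ring R] {M N : Type*} [AddCommGroup M] [AddCommGroup N]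
    [Module R M] [Module R N] (a b : ZMod 2) (f : M →ₗ[R] N) :
    signed a (signed b f) = signed (a + b) f := by
  have h2 : ∀ c : ZMod 2, c = 0 ∨ c = 1 := by decide
  rcases h2 a with rfl | rfl
  · rw [signed_zero, zero_add]
  · rcases h2 b with rfl | rfl
    · rw [add_zero, signed_zero]
    · rw [show (1 + 1 : ZMod 2) = 0 from by decide, signed_one, signed_one, signed_zero,
        neg_neg]

lemma signed_comp_left {R : Type*} [Ring R] {M N P : Type*} [AddCommGroup M] [AddCommGroup N]
    [AddCommGroup P] [Module R M] [Module R N] [Module R P] (a : ZMod 2)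
    (f : N →ₗ[R] P) (g : M →ₗ[R] N) : (signed a f).comp g = signed a (f.comp g) := by
  unfold signed; split_ifs <;> simp [LinearMap.neg_comp]

lemma comp_signed {R : Type*} [Ring R] {M N P : Type*} [AddCommGroup M] [AddCommGroup N]
    [AddCommGroup P] [Module R M] [Module R N] [Module R P] (a : ZMod 2)
    (f : N →ₗ[R] P) (g : M →ₗ[R] N) : f.comp (signed a g) = signed a (f.comp g) := by
  unfold signed; split_ifs <;> simp [LinearMap.comp_neg]

lemma signed_congr {R : Type*} [Ring R] {M N : Type*} [AddCommGroup M] [AddCommGroup N]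
    [Module R M] [Module R N] {a b : ZMod 2} (f : M →ₗ[R] N) (h : a = b) :
    signed a f = signed b f := by rw [h]

/-- The set of stars of `f` equals `T` when `fdim f = T.card` and every element of `T`
is a star. -/
lemma stars_eq {f : Face n} {T : Finset (Fin n)} (h1 : fdim f = T.card)
    (h2 : ∀ q ∈ T, f q = 1) : Finset.univ.filter (fun q => f q = 1) = T := by
  refine (Finset.eq_of_subset_of_card_le (fun q hq => ?_) (le_of_eq h1)).symm
  · exact Finset.mem_filter.mpr ⟨Finset.mem_univ _, h2 q hq⟩

lemma star_iff {f : Face n} {T : Finset (Fin n)} (h1 : fdim f = T.card)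
    (h2 : ∀ q ∈ T, f q = 1) (q : Fin n) : f q = 1 ↔ q ∈ T := by
  have := stars_eq h1 h2
  constructor
  · intro hq
    have : q ∈ Finset.univ.filter (fun q => f q = 1) := by
      simp only [Finset.mem_filter, Finset.mem_univ, true_and]; exact hq
    rwa [stars_eq h1 h2] at this
  · exact h2 q

/-- Upward closure along a star for strong-inductive sets. -/
lemma mem_up {S : Finset (Face n)} (hS : StrongInductive S) {f : Face n} (hf : f ∈ S)
    {x : Fin n} (hx : f x = 1) : Function.update f x 2 ∈ S := by
  classical
  obtain ⟨g, hgT, hgmax'⟩ := Finset.exists_maximal (s := S.filter (fun g => ∀ i, f i ≤ g i))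
    ⟨f, Finset.mem_filter.mpr ⟨hf, fun i => le_refl _⟩⟩
  have hgmax : ∀ x' ∈ S.filter (fun g => ∀ i, f i ≤ g i), ¬ g < x' :=
    fun x' hx' hlt => lt_irrefl _ (lt_of_lt_of_le hlt (hgmax' hx' hlt.le))
  obtain ⟨hgS, hfg⟩ := Finset.mem_filter.mp hgT
  have hdim : fdim g = 0 := by
    refine hS.2 g hgS (fun h hh hgh => ?_)
    have hhT : h ∈ S.filter (fun g => ∀ i, f i ≤ g i) :=
      Finset.mem_filter.mpr ⟨hh, fun i => le_trans (hfg i) (hgh i)⟩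
    have := hgmax h hhT
    by_contra hne
    exact this (lt_of_le_of_ne (fun i => hgh i) (fun e => hne e.symm))
  have hnostar : ∀ q, g q ≠ 1 := by
    intro q hq
    have : q ∈ Finset.univ.filter (fun q => g q = 1) := by simpa using hq
    rw [Finset.card_eq_zero.mp hdim] at this
    simpa using this
  have hgx : g x = 2 := by
    have h1 : (1 : Fin 3) ≤ g x := hx ▸ hfg x
    rcases fin3_cases (g x) with h | h | h
    · rw [h] at h1; exact absurd h1 (by decide)
    · exact absurd h (hnostar x)
    · exact h
  refine hS.1 g hgS _ (fun i => ?_)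
  by_cases hi : i = x
  · subst hi; rw [Function.update_self, hgx]
  · rw [Function.update_of_ne hi]; exact hfg i

end Aux
section Aux2
open Finset

variable {R : Type*} [Ring R] {n : ℕ}

open Classical in
/-- `eps X s = 0` if the square `s` anticommutes, `1` otherwise. -/
noncomputable def eps (X : SShape R n) (s : Face n) : ZMod 2 :=
  if ∃ i j : Fin n, i ≠ j ∧ s i = 1 ∧ s j = 1 ∧ sqComp X s i = -sqComp X s j then 0 else 1

/-- Zero out all the coordinates with index `< t`. -/
def zltN (s : Face n) (t : ℕ) : Face n := fun q => if (q : ℕ) < t then 0 else s q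

/-- The homotopy face: zero out coordinates below `p` and put a star at `p`. -/
def hface (e : Face n) (p : Fin n) : Face n := Function.update (zltN e p) p 1

/-- The sign assignment. -/
noncomputable def delta (X : SShape R n) (e : Face n) : ZMod 2 :=
  ∑ p ∈ Finset.univ.filter (fun p => e p = 2 ∧ ∀ q, q < p → e q ≠ 1), eps X (hface e p)

lemma faceRel {S : Finset (Face n)} {X : SShape R n} (hX : IsPreComplex S X) {t : Face n}
    (ht : t ∈ S) (h2 : fdim t = 2) {x y : Fin n} (hxy : x ≠ y) (hx : t x = 1) (hy : t y = 1) :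
    sqComp X t x = signed (eps X t + 1) (sqComp X t y) := by
  classical
  have hcard : fdim t = ({x, y} : Finset (Fin n)).card := by
    rw [Finset.card_insert_of_notMem (by simp [hxy]), Finset.card_singleton]; exact h2
  have hmem : ∀ q ∈ ({x, y} : Finset (Fin n)), t q = 1 := by
    intro q hq; rcases Finset.mem_insert.mp hq with rfl | hq
    · exact hx
    · rw [Finset.mem_singleton.mp hq]; exact hy
  unfold eps
  split_ifs with h
  · rw [zero_add, signed_one]
    obtain ⟨i, j, hij, hi, hj, hD⟩ := h
    have hi' := (star_iff hcard hmem i).mp hi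
    have hj' := (star_iff hcard hmem j).mp hj
    simp only [Finset.mem_insert, Finset.mem_singleton] at hi' hj'
    rcases hi' with rfl | rfl
    · rcases hj' with rfl | rfl
      · exact absurd rfl hij
      · exact hD
    · rcases hj' with rfl | rfl
      · rw [hD, neg_neg]
      · exact absurd rfl hij
  · rw [show (1 + 1 : ZMod 2) = 0 from by decide, signed_zero]
    rcases hX.1 t ht h2 x y hxy hx hy with he | he
    · exact he
    · exact absurd ⟨x, y, hxy, hx, hy, he⟩ h

end Aux2
section Aux3
open Finset Function

variable {n : ℕ}

lemma vset_apply (f : Face n) (a : Fin 3) (q : Fin n) :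
    vset f a q = if f q = 1 then a else f q := rfl

lemma update0_mem {S : Finset (Face n)} (hS : StrongInductive S) {c : Face n} (hc : c ∈ S)
    (m : Fin n) : Function.update c m 0 ∈ S := by
  refine hS.1 c hc _ (fun q => ?_)
  rcases eq_or_ne q m with rfl | h
  · rw [Function.update_self]; exact Fin.zero_le _
  · rw [Function.update_of_ne h]

section Three

variable {c : Face n} {x y z : Fin n}
variable (hxy : x ≠ y) (hxz : x ≠ z) (hyz : y ≠ z)
variable (hstar : ∀ q, c q = 1 ↔ q = x ∨ q = y ∨ q = z)

include hxy hxz hyz hstar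

lemma vset2_upd0 : vset (Function.update c x 0) 2 =
    Function.update (Function.update (vset c 0) y 2) z 2 := by
  funext q
  by_cases h1 : q = x <;> by_cases h2 : q = y <;> by_cases h3 : q = z <;>
    simp_all [Function.update_apply, vset_apply]

lemma vset2_upd2 : vset (Function.update c x 2) 2 = vset c 2 := by
  funext q
  by_cases h1 : q = x <;> by_cases h2 : q = y <;> by_cases h3 : q = z <;>
    simp_all [Function.update_apply, vset_apply]

lemma vset0_upd0 : vset (Function.update c x 0) 0 = vset c 0 := by
  funext q
  by_cases h1 : q = x <;> by_cases h2 : q = y <;> by_cases h3 : q = z <;>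
    simp_all [Function.update_apply, vset_apply]

lemma vset0_upd2 : vset (Function.update c x 2) 0 = Function.update (vset c 0) x 2 := by
  funext q
  by_cases h1 : q = x <;> by_cases h2 : q = y <;> by_cases h3 : q = z <;>
    simp_all [Function.update_apply, vset_apply]

lemma fdim_upd {a : Fin 3} (ha : a ≠ 1) : fdim (Function.update c x a) = 2 := by
  have hfil : (Finset.univ.filter fun q => Function.update c x a q = 1) = {y, z} := by
    ext q
    simp only [Finset.mem_filter, Finset.mem_univ, true_and, Finset.mem_insert,
      Finset.mem_singleton]
    by_cases h1 : q = x <;> by_cases h2 : q = y <;> by_cases h3 : q = z <;>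
      simp_all [Function.update_apply]
  rw [fdim, hfil, Finset.card_insert_of_notMem (by simp [hyz]), Finset.card_singleton]

lemma fdim_edge1 {a b : Fin 3} (ha : a ≠ 1) (hb : b ≠ 1) :
    fdim (Function.update (Function.update c y a) z b) = 1 := by
  have hfil : (Finset.univ.filter
      fun q => Function.update (Function.update c y a) z b q = 1) = {x} := by
    ext q
    simp only [Finset.mem_filter, Finset.mem_univ, true_and, Finset.mem_singleton]
    by_cases h1 : q = x <;> by_cases h2 : q = y <;> by_cases h3 : q = z <;>
      simp_all [Function.update_apply]
  rw [fdim, hfil, Finset.card_singleton]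

lemma edge1_vset0 : vset (Function.update (Function.update c y 0) z 0) 0 = vset c 0 := by
  funext q
  by_cases h1 : q = x <;> by_cases h2 : q = y <;> by_cases h3 : q = z <;>
    simp_all [Function.update_apply, vset_apply]

lemma edge1_vset2 : vset (Function.update (Function.update c y 0) z 0) 2 =
    Function.update (vset c 0) x 2 := by
  funext q
  by_cases h1 : q = x <;> by_cases h2 : q = y <;> by_cases h3 : q = z <;>
    simp_all [Function.update_apply, vset_apply]

lemma edge2_vset0 : vset (Function.update (Function.update c x 2) z 0) 0 =
    Function.update (vset c 0) x 2 := by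
  funext q
  by_cases h1 : q = x <;> by_cases h2 : q = y <;> by_cases h3 : q = z <;>
    simp_all [Function.update_apply, vset_apply]

lemma edge2_vset2 : vset (Function.update (Function.update c x 2) z 0) 2 =
    Function.update (Function.update (vset c 0) x 2) y 2 := by
  funext q
  by_cases h1 : q = x <;> by_cases h2 : q = y <;> by_cases h3 : q = z <;>
    simp_all [Function.update_apply, vset_apply]

lemma fdim_edge2 : fdim (Function.update (Function.update c x 2) z 0) = 1 := by
  have hfil : (Finset.univ.filter
      fun q => Function.update (Function.update c x 2) z 0 q = 1) = {y} := by
    ext q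
    simp only [Finset.mem_filter, Finset.mem_univ, true_and, Finset.mem_singleton]
    by_cases h1 : q = x <;> by_cases h2 : q = y <;> by_cases h3 : q = z <;>
      simp_all [Function.update_apply]
  rw [fdim, hfil, Finset.card_singleton]

lemma edge3_vset0 : vset (Function.update (Function.update c x 2) y 2) 0 =
    Function.update (Function.update (vset c 0) x 2) y 2 := by
  funext q
  by_cases h1 : q = x <;> by_cases h2 : q = y <;> by_cases h3 : q = z <;>
    simp_all [Function.update_apply, vset_apply]

lemma edge3_vset2 : vset (Function.update (Function.update c x 2) y 2) 2 = vset c 2 := by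
  funext q
  by_cases h1 : q = x <;> by_cases h2 : q = y <;> by_cases h3 : q = z <;>
    simp_all [Function.update_apply, vset_apply]

lemma fdim_edge3 : fdim (Function.update (Function.update c x 2) y 2) = 1 := by
  have hfil : (Finset.univ.filter
      fun q => Function.update (Function.update c x 2) y 2 q = 1) = {z} := by
    ext q
    simp only [Finset.mem_filter, Finset.mem_univ, true_and, Finset.mem_singleton]
    by_cases h1 : q = x <;> by_cases h2 : q = y <;> by_cases h3 : q = z <;>
      simp_all [Function.update_apply]
  rw [fdim, hfil, Finset.card_singleton]

end Three
end Aux3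
section Aux4
open Finset Function

variable {R : Type*} [Ring R] {n : ℕ}

lemma step_bot {A B C D B2 : Type*} [AddCommGroup A] [AddCommGroup B] [AddCommGroup C]
    [AddCommGroup D] [AddCommGroup B2] [Module R A] [Module R B] [Module R C] [Module R D]
    [Module R B2] (a : ZMod 2) (f : C →ₗ[R] D) {g : B →ₗ[R] C} {h : A →ₗ[R] B}
    {g' : B2 →ₗ[R] C} {h' : A →ₗ[R] B2} (hrel : g.comp h = signed a (g'.comp h')) :
    f.comp (g.comp h) = signed a (f.comp (g'.comp h')) := by
  rw [hrel, comp_signed]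

lemma step_top {A B C D C2 : Type*} [AddCommGroup A] [AddCommGroup B] [AddCommGroup C]
    [AddCommGroup D] [AddCommGroup C2] [Module R A] [Module R B] [Module R C] [Module R D]
    [Module R C2] (a : ZMod 2) {f : C →ₗ[R] D} {g : B →ₗ[R] C} (h : A →ₗ[R] B)
    {f' : C2 →ₗ[R] D} {g' : B →ₗ[R] C2} (hrel : f.comp g = signed a (f'.comp g')) :
    f.comp (g.comp h) = signed a (f'.comp (g'.comp h)) := by
  rw [← LinearMap.comp_assoc, hrel, signed_comp_left, LinearMap.comp_assoc]

lemma zmod2_eq_zero_or_one : ∀ a : ZMod 2, a = 0 ∨ a = 1 := by decide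

lemma cocycle {S : Finset (Face n)} {X : SShape R n} (hS : StrongInductive S)
    (hX : IsPreComplex S X) {c : Face n} (hc : c ∈ S) (h3 : fdim c = 3)
    {x y z : Fin n} (hxy : x ≠ y) (hxz : x ≠ z) (hyz : y ≠ z)
    (hx : c x = 1) (hy : c y = 1) (hz : c z = 1) :
    eps X (Function.update c x 0) + eps X (Function.update c x 2)
      + eps X (Function.update c y 0) + eps X (Function.update c y 2)
      + eps X (Function.update c z 0) + eps X (Function.update c z 2) = 0 := by
  classical
  have hstar : ∀ q, c q = 1 ↔ q = x ∨ q = y ∨ q = z := by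
    intro q
    have hcard : fdim c = ({x, y, z} : Finset (Fin n)).card := by
      rw [Finset.card_insert_of_notMem (by simp [hxy, hxz]),
        Finset.card_insert_of_notMem (by simp [hyz]), Finset.card_singleton]
      exact h3
    have hmem : ∀ q ∈ ({x, y, z} : Finset (Fin n)), c q = 1 := by
      intro q hq
      simp only [Finset.mem_insert, Finset.mem_singleton] at hq
      rcases hq with rfl | rfl | rfl <;> assumption
    rw [star_iff hcard hmem q]; simp
  -- permuted versions of hstar
  have hstarZXY : ∀ q, c q = 1 ↔ q = z ∨ q = x ∨ q = y := fun q => by rw [hstar q]; tauto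
  have hstarYXZ : ∀ q, c q = 1 ↔ q = y ∨ q = x ∨ q = z := fun q => by rw [hstar q]; tauto
  have hstarYZX : ∀ q, c q = 1 ↔ q = y ∨ q = z ∨ q = x := fun q => by rw [hstar q]; tauto
  have hstarZYX : ∀ q, c q = 1 ↔ q = z ∨ q = y ∨ q = x := fun q => by rw [hstar q]; tauto
  -- memberships
  have hm1 : Function.update c z 0 ∈ S := update0_mem hS hc z
  have hm2 : Function.update c y 2 ∈ S := mem_up hS hc hy
  have hm3 : Function.update c x 0 ∈ S := update0_mem hS hc x
  have hm4 : Function.update c z 2 ∈ S := mem_up hS hc hz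
  have hm5 : Function.update c y 0 ∈ S := update0_mem hS hc y
  have hm6 : Function.update c x 2 ∈ S := mem_up hS hc hx
  -- dimensions
  have hd1 : fdim (Function.update c z 0) = 2 :=
    fdim_upd hxz.symm hyz.symm hxy hstarZXY (by decide)
  have hd2 : fdim (Function.update c y 2) = 2 :=
    fdim_upd hxy.symm hyz hxz hstarYXZ (by decide)
  have hd3 : fdim (Function.update c x 0) = 2 := fdim_upd hxy hxz hyz hstar (by decide)
  have hd4 : fdim (Function.update c z 2) = 2 :=
    fdim_upd hxz.symm hyz.symm hxy hstarZXY (by decide)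
  have hd5 : fdim (Function.update c y 0) = 2 :=
    fdim_upd hxy.symm hyz hxz hstarYXZ (by decide)
  have hd6 : fdim (Function.update c x 2) = 2 := fdim_upd hxy hxz hyz hstar (by decide)
  -- the six square relations
  have R1 : sqComp X (Function.update c z 0) x
      = signed (eps X (Function.update c z 0) + 1) (sqComp X (Function.update c z 0) y) :=
    faceRel hX hm1 hd1 hxy (by rw [Function.update_of_ne hxz]; exact hx)
      (by rw [Function.update_of_ne hyz]; exact hy)
  have R2 : sqComp X (Function.update c y 2) x
      = signed (eps X (Function.update c y 2) + 1) (sqComp X (Function.update c y 2) z) :=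
    faceRel hX hm2 hd2 hxz (by rw [Function.update_of_ne hxy]; exact hx)
      (by rw [Function.update_of_ne (Ne.symm hyz)]; exact hz)
  have R3 : sqComp X (Function.update c x 0) y
      = signed (eps X (Function.update c x 0) + 1) (sqComp X (Function.update c x 0) z) :=
    faceRel hX hm3 hd3 hyz (by rw [Function.update_of_ne (Ne.symm hxy)]; exact hy)
      (by rw [Function.update_of_ne (Ne.symm hxz)]; exact hz)
  have R4 : sqComp X (Function.update c z 2) y
      = signed (eps X (Function.update c z 2) + 1) (sqComp X (Function.update c z 2) x) :=
    faceRel hX hm4 hd4 (Ne.symm hxy) (by rw [Function.update_of_ne hyz]; exact hy)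
      (by rw [Function.update_of_ne hxz]; exact hx)
  have R5 : sqComp X (Function.update c y 0) z
      = signed (eps X (Function.update c y 0) + 1) (sqComp X (Function.update c y 0) x) :=
    faceRel hX hm5 hd5 (Ne.symm hxz) (by rw [Function.update_of_ne (Ne.symm hyz)]; exact hz)
      (by rw [Function.update_of_ne hxy]; exact hx)
  have R6 : sqComp X (Function.update c x 2) z
      = signed (eps X (Function.update c x 2) + 1) (sqComp X (Function.update c x 2) y) :=
    faceRel hX hm6 hd6 (Ne.symm hyz) (by rw [Function.update_of_ne (Ne.symm hxz)]; exact hz)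
      (by rw [Function.update_of_ne (Ne.symm hxy)]; exact hy)
  -- vertex identities
  have A1 : vset (Function.update c z 0) 0 = vset c 0 :=
    vset0_upd0 hxz.symm hyz.symm hxy hstarZXY
  have B1 : vset (Function.update c z 0) 2
      = Function.update (Function.update (vset c 0) x 2) y 2 :=
    vset2_upd0 hxz.symm hyz.symm hxy hstarZXY
  have A2 : vset (Function.update c y 2) 0 = Function.update (vset c 0) y 2 :=
    vset0_upd2 hxy.symm hyz hxz hstarYXZ
  have B2 : vset (Function.update c y 2) 2 = vset c 2 :=
    vset2_upd2 hxy.symm hyz hxz hstarYXZ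
  have A3 : vset (Function.update c x 0) 0 = vset c 0 := vset0_upd0 hxy hxz hyz hstar
  have B3 : vset (Function.update c x 0) 2
      = Function.update (Function.update (vset c 0) y 2) z 2 :=
    vset2_upd0 hxy hxz hyz hstar
  have A4 : vset (Function.update c z 2) 0 = Function.update (vset c 0) z 2 :=
    vset0_upd2 hxz.symm hyz.symm hxy hstarZXY
  have B4 : vset (Function.update c z 2) 2 = vset c 2 :=
    vset2_upd2 hxz.symm hyz.symm hxy hstarZXY
  have A5 : vset (Function.update c y 0) 0 = vset c 0 :=
    vset0_upd0 hxy.symm hyz hxz hstarYXZ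
  have B5 : vset (Function.update c y 0) 2
      = Function.update (Function.update (vset c 0) x 2) z 2 :=
    vset2_upd0 hxy.symm hyz hxz hstarYXZ
  have A6 : vset (Function.update c x 2) 0 = Function.update (vset c 0) x 2 :=
    vset0_upd2 hxy hxz hyz hstar
  have B6 : vset (Function.update c x 2) 2 = vset c 2 := vset2_upd2 hxy hxz hyz hstar
  -- commutation of updates
  have hcYX : Function.update (Function.update (vset c 0) y 2) x 2
      = Function.update (Function.update (vset c 0) x 2) y 2 :=
    Function.update_comm (Ne.symm hxy) 2 2 _
  have hcZY : Function.update (Function.update (vset c 0) z 2) y 2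
      = Function.update (Function.update (vset c 0) y 2) z 2 :=
    Function.update_comm (Ne.symm hyz) 2 2 _
  have hcZX : Function.update (Function.update (vset c 0) z 2) x 2
      = Function.update (Function.update (vset c 0) x 2) z 2 :=
    Function.update_comm (Ne.symm hxz) 2 2 _
  delta sqComp corner0 at R1 R2 R3 R4 R5 R6
  rw [A1, B1] at R1
  rw [A2, B2, hcYX] at R2
  rw [A3, B3] at R3
  rw [A4, B4, hcZY, hcZX] at R4
  rw [A5, B5] at R5
  rw [A6, B6] at R6
  -- the hexagon chain
  have s1 := step_bot (R := R) (eps X (Function.update c z 0) + 1)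
    (X.d (Function.update (Function.update (vset c 0) x 2) y 2) (vset c 2)) R1
  have s2 := step_top (R := R) (eps X (Function.update c y 2) + 1)
    (X.d (vset c 0) (Function.update (vset c 0) y 2)) R2
  have s3 := step_bot (R := R) (eps X (Function.update c x 0) + 1)
    (X.d (Function.update (Function.update (vset c 0) y 2) z 2) (vset c 2)) R3
  have s4 := step_top (R := R) (eps X (Function.update c z 2) + 1)
    (X.d (vset c 0) (Function.update (vset c 0) z 2)) R4
  have s5 := step_bot (R := R) (eps X (Function.update c y 0) + 1)
    (X.d (Function.update (Function.update (vset c 0) x 2) z 2) (vset c 2)) R5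
  have s6 := step_top (R := R) (eps X (Function.update c x 2) + 1)
    (X.d (vset c 0) (Function.update (vset c 0) x 2)) R6
  have total : (X.d (Function.update (Function.update (vset c 0) x 2) y 2) (vset c 2)).comp
      ((X.d (Function.update (vset c 0) x 2)
          (Function.update (Function.update (vset c 0) x 2) y 2)).comp
        (X.d (vset c 0) (Function.update (vset c 0) x 2)))
      = signed ((((((eps X (Function.update c z 0) + 1) + (eps X (Function.update c y 2) + 1))
            + (eps X (Function.update c x 0) + 1)) + (eps X (Function.update c z 2) + 1))
            + (eps X (Function.update c y 0) + 1)) + (eps X (Function.update c x 2) + 1))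
        ((X.d (Function.update (Function.update (vset c 0) x 2) y 2) (vset c 2)).comp
          ((X.d (Function.update (vset c 0) x 2)
              (Function.update (Function.update (vset c 0) x 2) y 2)).comp
            (X.d (vset c 0) (Function.update (vset c 0) x 2)))) := by
    refine s1.trans ?_
    rw [s2, signed_signed, s3, signed_signed, s4, signed_signed, s5, signed_signed,
      s6, signed_signed]
  by_contra hne
  have hone := (zmod2_eq_zero_or_one (eps X (Function.update c x 0)
    + eps X (Function.update c x 2) + eps X (Function.update c y 0)
    + eps X (Function.update c y 2) + eps X (Function.update c z 0)
    + eps X (Function.update c z 2))).resolve_left hne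
  have key : ∀ a b c d e f : ZMod 2, c + f + e + b + a + d = 1 →
      (((((a + 1) + (b + 1)) + (c + 1)) + (d + 1)) + (e + 1)) + (f + 1) = 1 := by decide
  have hsig := key _ _ _ _ _ _ hone
  rw [signed_congr _ hsig, signed_one] at total
  refine hX.2 (vset c 0) (Function.update (vset c 0) x 2)
    (Function.update (Function.update (vset c 0) x 2) y 2) (vset c 2)
    ⟨Function.update (Function.update c y 0) z 0,
      update0_mem hS (update0_mem hS hc y) z,
      fdim_edge1 hxy hxz hyz hstar (by decide) (by decide),
      edge1_vset0 hxy hxz hyz hstar, edge1_vset2 hxy hxz hyz hstar⟩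
    ⟨Function.update (Function.update c x 2) z 0,
      update0_mem hS hm6 z,
      fdim_edge2 hxy hxz hyz hstar,
      edge2_vset0 hxy hxz hyz hstar, edge2_vset2 hxy hxz hyz hstar⟩
    ⟨Function.update (Function.update c x 2) y 2,
      mem_up hS hm6 (by rw [Function.update_of_ne (Ne.symm hxy)]; exact hy),
      fdim_edge3 hxy hxz hyz hstar,
      edge3_vset0 hxy hxz hyz hstar, edge3_vset2 hxy hxz hyz hstar⟩ ?_
  rw [two_smul]
  nth_rewrite 1 [total]
  exact neg_add_cancel _

end Aux4
section Aux5
open Finset Function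

variable {n : ℕ}

lemma hface_apply (e : Face n) (p : Fin n) (q : Fin n) :
    hface e p q = if q = p then 1 else if (q : ℕ) < (p : ℕ) then 0 else e q := by
  simp [hface, zltN, Function.update_apply]

lemma zltN_zero (s : Face n) : zltN s 0 = s := by
  funext q; simp [zltN]

section SquareEdges

variable {s : Face n} {i j : Fin n}
variable (hne : i ≠ j) (hstar2 : ∀ q, s q = 1 ↔ q = i ∨ q = j)

include hne hstar2

-- square boundary edges
lemma sq_edge_a : corner0 s i 1 = Function.update s j 0 := by
  funext q
  rcases eq_or_ne q i with rfl | hqi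
  · rw [corner0, Function.update_self, Function.update_of_ne hne]
    exact ((hstar2 q).mpr (Or.inl rfl)).symm
  rcases eq_or_ne q j with rfl | hqj
  · rw [corner0, Function.update_of_ne hqi, Function.update_self, vset_apply,
      if_pos ((hstar2 q).mpr (Or.inr rfl))]
  · rw [corner0, Function.update_of_ne hqi, Function.update_of_ne hqj, vset_apply,
      if_neg (fun h => by rcases (hstar2 q).mp h with rfl | rfl
                          exacts [hqi rfl, hqj rfl])]

lemma sq_edge_b : corner2 s j 1 = Function.update s i 2 := by
  funext q
  rcases eq_or_ne q j with rfl | hqj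
  · rw [corner2, Function.update_self, Function.update_of_ne (Ne.symm hne)]
    exact ((hstar2 q).mpr (Or.inr rfl)).symm
  rcases eq_or_ne q i with rfl | hqi
  · rw [corner2, Function.update_of_ne hqj, Function.update_self, vset_apply,
      if_pos ((hstar2 q).mpr (Or.inl rfl))]
  · rw [corner2, Function.update_of_ne hqj, Function.update_of_ne hqi, vset_apply,
      if_neg (fun h => by rcases (hstar2 q).mp h with rfl | rfl
                          exacts [hqi rfl, hqj rfl])]

lemma sq_edge_c : corner0 s j 1 = Function.update s i 0 := by
  funext q
  rcases eq_or_ne q j with rfl | hqj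
  · rw [corner0, Function.update_self, Function.update_of_ne (Ne.symm hne)]
    exact ((hstar2 q).mpr (Or.inr rfl)).symm
  rcases eq_or_ne q i with rfl | hqi
  · rw [corner0, Function.update_of_ne hqj, Function.update_self, vset_apply,
      if_pos ((hstar2 q).mpr (Or.inl rfl))]
  · rw [corner0, Function.update_of_ne hqj, Function.update_of_ne hqi, vset_apply,
      if_neg (fun h => by rcases (hstar2 q).mp h with rfl | rfl
                          exacts [hqi rfl, hqj rfl])]

lemma sq_edge_d : corner2 s i 1 = Function.update s j 2 := by
  funext q
  rcases eq_or_ne q i with rfl | hqi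
  · rw [corner2, Function.update_self, Function.update_of_ne hne]
    exact ((hstar2 q).mpr (Or.inl rfl)).symm
  rcases eq_or_ne q j with rfl | hqj
  · rw [corner2, Function.update_of_ne hqi, Function.update_self, vset_apply,
      if_pos ((hstar2 q).mpr (Or.inr rfl))]
  · rw [corner2, Function.update_of_ne hqi, Function.update_of_ne hqj, vset_apply,
      if_neg (fun h => by rcases (hstar2 q).mp h with rfl | rfl
                          exacts [hqi rfl, hqj rfl])]

end SquareEdges

section Square

variable {s : Face n} {i j : Fin n}
variable (hij : (i : ℕ) < (j : ℕ)) (hstar2 : ∀ q, s q = 1 ↔ q = i ∨ q = j)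

include hij hstar2

-- filter characterizations
lemma filt_j0 (p : Fin n) :
    (Function.update s j 0 p = 2 ∧ ∀ q, q < p → Function.update s j 0 q ≠ 1) ↔
      ((p : ℕ) < (i : ℕ) ∧ s p = 2) := by
  constructor
  · rintro ⟨h2e, hbel⟩
    have hpj : p ≠ j := by
      intro h; rw [h, Function.update_self] at h2e; exact absurd h2e (by decide)
    rw [Function.update_of_ne hpj] at h2e
    have hpi : p ≠ i := by intro h; rw [h] at h2e; rw [(hstar2 i).mpr (Or.inl rfl)] at h2e; exact absurd h2e (by decide)
    refine ⟨?_, h2e⟩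
    by_contra hge
    have hip : i < p := by
      rcases lt_trichotomy (i : ℕ) (p : ℕ) with h | h | h
      · exact h
      · exact absurd (Fin.ext h) (Ne.symm hpi)
      · exact absurd h hge
    have := hbel i hip
    rw [Function.update_of_ne (fun h => by omega : i ≠ j)] at this
    exact this ((hstar2 i).mpr (Or.inl rfl))
  · rintro ⟨hpi, hp2⟩
    have hpj : p ≠ j := fun h => by rw [h] at hpi; omega
    have hpi' : p ≠ i := fun h => by rw [h] at hpi; omega
    refine ⟨by rw [Function.update_of_ne hpj]; exact hp2, fun q hq => ?_⟩
    have hq' : (q : ℕ) < (p : ℕ) := hq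
    have hqj : q ≠ j := fun h => by rw [h] at hq'; omega
    rw [Function.update_of_ne hqj]
    intro h1
    rcases (hstar2 q).mp h1 with rfl | rfl <;> omega

lemma filt_j2 (p : Fin n) :
    (Function.update s j 2 p = 2 ∧ ∀ q, q < p → Function.update s j 2 q ≠ 1) ↔
      ((p : ℕ) < (i : ℕ) ∧ s p = 2) := by
  constructor
  · rintro ⟨h2e, hbel⟩
    have hpj : p ≠ j := by
      intro h
      have hvp : (p : ℕ) = (j : ℕ) := congrArg Fin.val h
      have hip : i < p := by rw [Fin.lt_def]; omega
      have h2 := hbel i hip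
      rw [Function.update_of_ne (show i ≠ j by omega)] at h2
      exact h2 ((hstar2 i).mpr (Or.inl rfl))
    rw [Function.update_of_ne hpj] at h2e
    have hpi : p ≠ i := by intro h; rw [h] at h2e; rw [(hstar2 i).mpr (Or.inl rfl)] at h2e; exact absurd h2e (by decide)
    refine ⟨?_, h2e⟩
    by_contra hge
    have hip : i < p := by
      rcases lt_trichotomy (i : ℕ) (p : ℕ) with h | h | h
      · exact h
      · exact absurd (Fin.ext h) (Ne.symm hpi)
      · exact absurd h hge
    have := hbel i hip
    rw [Function.update_of_ne (fun h => by omega : i ≠ j)] at this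
    exact this ((hstar2 i).mpr (Or.inl rfl))
  · rintro ⟨hpi, hp2⟩
    have hpj : p ≠ j := fun h => by rw [h] at hpi; omega
    refine ⟨by rw [Function.update_of_ne hpj]; exact hp2, fun q hq => ?_⟩
    have hq' : (q : ℕ) < (p : ℕ) := hq
    have hqj : q ≠ j := fun h => by rw [h] at hq'; omega
    rw [Function.update_of_ne hqj]
    intro h1
    rcases (hstar2 q).mp h1 with rfl | rfl <;> omega

lemma filt_i0 (p : Fin n) :
    (Function.update s i 0 p = 2 ∧ ∀ q, q < p → Function.update s i 0 q ≠ 1) ↔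
      (((p : ℕ) < (i : ℕ) ∧ s p = 2) ∨
        ((i : ℕ) < (p : ℕ) ∧ (p : ℕ) < (j : ℕ) ∧ s p = 2)) := by
  constructor
  · rintro ⟨h2e, hbel⟩
    have hpi : p ≠ i := by
      intro h; rw [h, Function.update_self] at h2e; exact absurd h2e (by decide)
    rw [Function.update_of_ne hpi] at h2e
    have hpj : p ≠ j := by intro h; rw [h] at h2e; rw [(hstar2 j).mpr (Or.inr rfl)] at h2e; exact absurd h2e (by decide)
    have hpltj : (p : ℕ) < (j : ℕ) := by
      by_contra hge
      have hjp : j < p := by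
        rcases lt_trichotomy (j : ℕ) (p : ℕ) with h | h | h
        · exact h
        · exact absurd (Fin.ext h) (Ne.symm hpj)
        · exact absurd h hge
      have := hbel j hjp
      rw [Function.update_of_ne (fun h => by omega : j ≠ i)] at this
      exact this ((hstar2 j).mpr (Or.inr rfl))
    rcases lt_trichotomy (p : ℕ) (i : ℕ) with h | h | h
    · exact Or.inl ⟨h, h2e⟩
    · exact absurd (Fin.ext h) hpi
    · exact Or.inr ⟨h, hpltj, h2e⟩
  · rintro (⟨hpi, hp2⟩ | ⟨hip, hpj, hp2⟩)
    · have hpi' : p ≠ i := fun h => by rw [h] at hpi; omega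
      refine ⟨by rw [Function.update_of_ne hpi']; exact hp2, fun q hq => ?_⟩
      have hq' : (q : ℕ) < (p : ℕ) := hq
      have hqi : q ≠ i := fun h => by rw [h] at hq'; omega
      rw [Function.update_of_ne hqi]
      intro h1
      rcases (hstar2 q).mp h1 with rfl | rfl <;> omega
    · have hpi' : p ≠ i := fun h => by rw [h] at hip; omega
      refine ⟨by rw [Function.update_of_ne hpi']; exact hp2, fun q hq => ?_⟩
      have hq' : (q : ℕ) < (p : ℕ) := hq
      rcases eq_or_ne q i with rfl | hqi
      · rw [Function.update_self]; decide
      · rw [Function.update_of_ne hqi]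
        intro h1
        rcases (hstar2 q).mp h1 with rfl | rfl <;> omega

lemma filt_i2 (p : Fin n) :
    (Function.update s i 2 p = 2 ∧ ∀ q, q < p → Function.update s i 2 q ≠ 1) ↔
      (((p : ℕ) < (i : ℕ) ∧ s p = 2) ∨ (p = i ∨
        ((i : ℕ) < (p : ℕ) ∧ (p : ℕ) < (j : ℕ) ∧ s p = 2))) := by
  constructor
  · rintro ⟨h2e, hbel⟩
    rcases eq_or_ne p i with rfl | hpi
    · exact Or.inr (Or.inl rfl)
    rw [Function.update_of_ne hpi] at h2e
    have hpj : p ≠ j := by intro h; rw [h] at h2e; rw [(hstar2 j).mpr (Or.inr rfl)] at h2e; exact absurd h2e (by decide)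
    have hpltj : (p : ℕ) < (j : ℕ) := by
      by_contra hge
      have hjp : j < p := by
        rcases lt_trichotomy (j : ℕ) (p : ℕ) with h | h | h
        · exact h
        · exact absurd (Fin.ext h) (Ne.symm hpj)
        · exact absurd h hge
      have := hbel j hjp
      rw [Function.update_of_ne (fun h => by omega : j ≠ i)] at this
      exact this ((hstar2 j).mpr (Or.inr rfl))
    rcases lt_trichotomy (p : ℕ) (i : ℕ) with h | h | h
    · exact Or.inl ⟨h, h2e⟩
    · exact absurd (Fin.ext h) hpi
    · exact Or.inr (Or.inr ⟨h, hpltj, h2e⟩)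
  · rintro (⟨hpi, hp2⟩ | rfl | ⟨hip, hpj, hp2⟩)
    · have hpi' : p ≠ i := fun h => by rw [h] at hpi; omega
      refine ⟨by rw [Function.update_of_ne hpi']; exact hp2, fun q hq => ?_⟩
      have hq' : (q : ℕ) < (p : ℕ) := hq
      have hqi : q ≠ i := fun h => by rw [h] at hq'; omega
      rw [Function.update_of_ne hqi]
      intro h1
      rcases (hstar2 q).mp h1 with rfl | rfl <;> omega
    · refine ⟨by rw [Function.update_self], fun q hq => ?_⟩
      have hq' : (q : ℕ) < (p : ℕ) := hq
      have hqi : q ≠ p := fun h => by rw [h] at hq'; omega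
      rw [Function.update_of_ne hqi]
      intro h1
      rcases (hstar2 q).mp h1 with rfl | rfl <;> omega
    · have hpi' : p ≠ i := fun h => by rw [h] at hip; omega
      refine ⟨by rw [Function.update_of_ne hpi']; exact hp2, fun q hq => ?_⟩
      have hq' : (q : ℕ) < (p : ℕ) := hq
      rcases eq_or_ne q i with rfl | hqi
      · rw [Function.update_self]; decide
      · rw [Function.update_of_ne hqi]
        intro h1
        rcases (hstar2 q).mp h1 with rfl | rfl <;> omega


-- homotopy face identities
lemma hM1 (p : Fin n) (hpi : (p : ℕ) < (i : ℕ)) :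
    hface (Function.update s j 0) p
      = Function.update (Function.update (zltN s ↑p) p 1) j 0 := by
  funext q
  simp only [hface_apply, Function.update_apply, zltN]
  split_ifs <;> first | rfl | omega

lemma hM2 (p : Fin n) (hpi : (p : ℕ) < (i : ℕ)) :
    hface (Function.update s j 2) p
      = Function.update (Function.update (zltN s ↑p) p 1) j 2 := by
  funext q
  simp only [hface_apply, Function.update_apply, zltN]
  split_ifs <;> first | rfl | omega

lemma hM3 (p : Fin n) (hpi : (p : ℕ) < (i : ℕ)) :
    hface (Function.update s i 0) p
      = Function.update (Function.update (zltN s ↑p) p 1) i 0 := by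
  funext q
  simp only [hface_apply, Function.update_apply, zltN]
  split_ifs <;> first | rfl | omega

lemma hM4 (p : Fin n) (hpi : (p : ℕ) < (i : ℕ)) :
    hface (Function.update s i 2) p
      = Function.update (Function.update (zltN s ↑p) p 1) i 2 := by
  funext q
  simp only [hface_apply, Function.update_apply, zltN]
  split_ifs <;> first | rfl | omega

lemma hM5 : hface (Function.update s i 2) i = zltN s ↑i := by
  have hsi : s i = 1 := (hstar2 i).mpr (Or.inl rfl)
  funext q
  simp only [hface_apply, Function.update_apply, zltN]
  split_ifs <;> first | rfl | omega | (subst_vars; exact hsi.symm)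

lemma hM6 (p : Fin n) (hip : (i : ℕ) < (p : ℕ)) :
    hface (Function.update s i 0) p = hface (Function.update s i 2) p := by
  funext q
  simp only [hface_apply, Function.update_apply, zltN]
  split_ifs <;> first | rfl | omega

end Square

lemma hM7 {s : Face n} (p : Fin n) :
    Function.update (Function.update (zltN s ↑p) p 1) p 0 = zltN s (↑p + 1) := by
  funext q
  simp only [Function.update_apply, zltN]
  split_ifs <;> first | rfl | omega

lemma hM8 {s : Face n} (p : Fin n) (hp2 : s p = 2) :
    Function.update (Function.update (zltN s ↑p) p 1) p 2 = zltN s ↑p := by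
  funext q
  simp only [Function.update_apply, zltN]
  split_ifs <;> first | rfl | omega | simp_all

end Aux5
section Aux6
open Finset Function

variable {R : Type*} [Ring R] {n : ℕ}

lemma zmod2_add_self (a : ZMod 2) : a + a = 0 := by
  rcases zmod2_eq_zero_or_one a with rfl | rfl <;> decide

lemma neg_signed {M N : Type*} [AddCommGroup M] [AddCommGroup N] [Module R M] [Module R N]
    (a : ZMod 2) (f : M →ₗ[R] N) : -(signed a f) = signed (a + 1) f := by
  rcases zmod2_eq_zero_or_one a with rfl | rfl
  · rw [signed_zero, zero_add, signed_one]
  · rw [signed_one, neg_neg, show (1 + 1 : ZMod 2) = 0 from by decide, signed_zero]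

lemma telescope (X : SShape R n) {s : Face n} {i j : Fin n}
    (hij : (i : ℕ) < (j : ℕ)) (hstar2 : ∀ q, s q = 1 ↔ q = i ∨ q = j) :
    ∀ t : ℕ, t ≤ (i : ℕ) →
      ∑ p ∈ Finset.univ.filter (fun p : Fin n => (p : ℕ) < t ∧ s p = 2),
          (eps X (zltN s (↑p + 1)) + eps X (zltN s ↑p))
        = eps X (zltN s t) + eps X (zltN s 0) := by
  intro t
  induction t with
  | zero =>
    intro _
    rw [Finset.filter_false_of_mem (fun p _ h => (Nat.not_lt_zero _) h.1),
      Finset.sum_empty]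
    exact (zmod2_add_self _).symm
  | succ t IH =>
    intro hle
    have htn : t < n := by have := i.isLt; omega
    by_cases h2 : s ⟨t, htn⟩ = 2
    · have hins : Finset.univ.filter (fun p : Fin n => (p : ℕ) < t + 1 ∧ s p = 2)
          = insert ⟨t, htn⟩ (Finset.univ.filter (fun p : Fin n => (p : ℕ) < t ∧ s p = 2)) := by
        ext p
        simp only [Finset.mem_filter, Finset.mem_univ, true_and, Finset.mem_insert]
        constructor
        · rintro ⟨hlt, hsp⟩
          rcases Nat.lt_succ_iff_lt_or_eq.mp hlt with h | h
          · exact Or.inr ⟨h, hsp⟩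
          · exact Or.inl (Fin.ext h)
        · rintro (rfl | ⟨hlt, hsp⟩)
          · exact ⟨Nat.lt_succ_self _, h2⟩
          · exact ⟨Nat.lt_succ_of_lt hlt, hsp⟩
      rw [hins, Finset.sum_insert (by
        intro hmem
        exact absurd (Finset.mem_filter.mp hmem).2.1 (Nat.lt_irrefl t))]
      rw [IH (by omega)]
      have key : ∀ a b c : ZMod 2, a + b + (b + c) = a + c := by decide
      exact key _ _ _
    · have hne1 : s ⟨t, htn⟩ ≠ 1 := by
        intro h
        rcases (hstar2 _).mp h with h' | h'
        · have := congrArg Fin.val h'; simp only at this; omega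
        · have := congrArg Fin.val h'; simp only at this; omega
      have h1 : s ⟨t, htn⟩ = 0 := by
        rcases fin3_cases (s ⟨t, htn⟩) with h | h | h
        · exact h
        · exact absurd h hne1
        · exact absurd h h2
      have hfeq : Finset.univ.filter (fun p : Fin n => (p : ℕ) < t + 1 ∧ s p = 2)
          = Finset.univ.filter (fun p : Fin n => (p : ℕ) < t ∧ s p = 2) := by
        ext p
        simp only [Finset.mem_filter, Finset.mem_univ, true_and]
        constructor
        · rintro ⟨hlt, hsp⟩
          refine ⟨?_, hsp⟩
          rcases Nat.lt_succ_iff_lt_or_eq.mp hlt with h | h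
          · exact h
          · exact absurd ((Fin.ext h : p = ⟨t, htn⟩) ▸ hsp) h2
        · rintro ⟨hlt, hsp⟩; exact ⟨by omega, hsp⟩
      have hgeq : zltN s (t + 1) = zltN s t := by
        funext q
        simp only [zltN]
        by_cases hq : (q : ℕ) = t
        · have hqe : q = ⟨t, htn⟩ := Fin.ext hq
          rw [if_pos (by omega), if_neg (by omega), hqe, h1]
        · split_ifs <;> first | rfl | omega
      rw [hfeq, hgeq]
      exact IH (by omega)

lemma sigma_eq {S : Finset (Face n)} {X : SShape R n} (hS : StrongInductive S)
    (hX : IsPreComplex S X) {s : Face n} (hs : s ∈ S) (h2 : fdim s = 2) {i j : Fin n}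
    (hij : (i : ℕ) < (j : ℕ)) (hi : s i = 1) (hj : s j = 1) :
    delta X (Function.update s i 0) + delta X (Function.update s i 2)
      + delta X (Function.update s j 0) + delta X (Function.update s j 2) = eps X s := by
  classical
  have hne : i ≠ j := fun h => by rw [h] at hij; exact lt_irrefl _ hij
  have hstar2 : ∀ q, s q = 1 ↔ q = i ∨ q = j := by
    intro q
    have hcard : fdim s = ({i, j} : Finset (Fin n)).card := by
      rw [Finset.card_insert_of_notMem (by simp [hne]), Finset.card_singleton]; exact h2
    have hmem : ∀ q ∈ ({i, j} : Finset (Fin n)), s q = 1 := by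
      intro q hq
      rcases Finset.mem_insert.mp hq with rfl | hq
      · exact hi
      · rw [Finset.mem_singleton.mp hq]; exact hj
    rw [star_iff hcard hmem q]; simp
  have hpoint : ∀ p : Fin n,
      (if Function.update s i 0 p = 2 ∧ ∀ q, q < p → Function.update s i 0 q ≠ 1 then
          eps X (hface (Function.update s i 0) p) else 0)
        + (if Function.update s i 2 p = 2 ∧ ∀ q, q < p → Function.update s i 2 q ≠ 1 then
          eps X (hface (Function.update s i 2) p) else 0)
        + (if Function.update s j 0 p = 2 ∧ ∀ q, q < p → Function.update s j 0 q ≠ 1 then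
          eps X (hface (Function.update s j 0) p) else 0)
        + (if Function.update s j 2 p = 2 ∧ ∀ q, q < p → Function.update s j 2 q ≠ 1 then
          eps X (hface (Function.update s j 2) p) else 0)
      = (if (p : ℕ) < (i : ℕ) ∧ s p = 2 then
            eps X (zltN s (↑p + 1)) + eps X (zltN s ↑p) else 0)
        + (if p = i then eps X (zltN s ↑i) else 0) := by
    intro p
    by_cases hA : (p : ℕ) < (i : ℕ) ∧ s p = 2
    · obtain ⟨hA1, hA2⟩ := hA
      have hpi : p ≠ i := fun h => by rw [h] at hA1; omega
      have hpj : p ≠ j := fun h => by rw [h] at hA1; omega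
      rw [if_pos ((filt_i0 hij hstar2 p).mpr (Or.inl ⟨hA1, hA2⟩)),
        if_pos ((filt_i2 hij hstar2 p).mpr (Or.inl ⟨hA1, hA2⟩)),
        if_pos ((filt_j0 hij hstar2 p).mpr ⟨hA1, hA2⟩),
        if_pos ((filt_j2 hij hstar2 p).mpr ⟨hA1, hA2⟩),
        if_pos (⟨hA1, hA2⟩ : (p : ℕ) < (i : ℕ) ∧ s p = 2), if_neg hpi, add_zero,
        hM3 hij hstar2 p hA1, hM4 hij hstar2 p hA1,
        hM1 hij hstar2 p hA1, hM2 hij hstar2 p hA1]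
      have hcpS : Function.update (zltN s ↑p) p 1 ∈ S := by
        refine hS.1 s hs _ (fun q => ?_)
        rcases eq_or_ne q p with rfl | hqp
        · rw [Function.update_self, hA2]; decide
        · rw [Function.update_of_ne hqp]
          simp only [zltN]
          split_ifs
          · exact Fin.zero_le _
          · exact le_rfl
      have hcp3 : fdim (Function.update (zltN s ↑p) p 1) = 3 := by
        have hfil : (Finset.univ.filter fun q => Function.update (zltN s ↑p) p 1 q = 1)
            = {p, i, j} := by
          ext q
          simp only [Finset.mem_filter, Finset.mem_univ, true_and, Finset.mem_insert,
            Finset.mem_singleton]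
          rcases eq_or_ne q p with rfl | hqp
          · simp
          · rw [Function.update_of_ne hqp]
            simp only [zltN]
            split_ifs with hlt
            · constructor
              · intro h; exact absurd h (by decide)
              · rintro (rfl | rfl | rfl)
                · exact absurd rfl hqp
                · omega
                · omega
            · rw [hstar2 q]
              constructor
              · exact fun h => Or.inr h
              · rintro (rfl | h)
                · exact absurd rfl hqp
                · exact h
        rw [fdim, hfil,
          Finset.card_insert_of_notMem (by
            simp only [Finset.mem_insert, Finset.mem_singleton]
            rintro (rfl | rfl)
            · omega
            · omega),
          Finset.card_insert_of_notMem (by simpa using hne), Finset.card_singleton]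
      have hcpi : Function.update (zltN s ↑p) p 1 i = 1 := by
        rw [Function.update_of_ne (Ne.symm hpi)]
        simp only [zltN]
        rw [if_neg (by omega)]
        exact hi
      have hcpj : Function.update (zltN s ↑p) p 1 j = 1 := by
        rw [Function.update_of_ne (Ne.symm hpj)]
        simp only [zltN]
        rw [if_neg (by omega)]
        exact hj
      have hcpp : Function.update (zltN s ↑p) p 1 p = 1 := Function.update_self _ _ _
      have hco := cocycle hS hX hcpS hcp3 hne (Ne.symm hpi) (Ne.symm hpj) hcpi hcpj hcpp
      rw [hM7 p, hM8 p hA2] at hco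
      have hdec : ∀ a b c d e f : ZMod 2, a + b + c + d + e + f = 0 → a + b + c + d = e + f :=
        by decide
      exact hdec _ _ _ _ _ _ hco
    · by_cases hB : p = i
      · rw [if_neg (fun h => ((filt_i0 hij hstar2 p).mp h).elim hA
            (fun h' => by have := h'.1; rw [hB] at this; omega)),
          if_pos ((filt_i2 hij hstar2 p).mpr (Or.inr (Or.inl hB))),
          if_neg (fun h => hA ((filt_j0 hij hstar2 p).mp h)),
          if_neg (fun h => hA ((filt_j2 hij hstar2 p).mp h)),
          if_neg hA, if_pos hB, hB, hM5 hij hstar2]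
        have key : ∀ a : ZMod 2, 0 + a + 0 + 0 = 0 + a := by decide
        exact key _
      · by_cases hC : (i : ℕ) < (p : ℕ) ∧ (p : ℕ) < (j : ℕ) ∧ s p = 2
        · rw [if_pos ((filt_i0 hij hstar2 p).mpr (Or.inr hC)),
            if_pos ((filt_i2 hij hstar2 p).mpr (Or.inr (Or.inr hC))),
            if_neg (fun h => hA ((filt_j0 hij hstar2 p).mp h)),
            if_neg (fun h => hA ((filt_j2 hij hstar2 p).mp h)),
            if_neg hA, if_neg hB, hM6 hij hstar2 p hC.1]
          have key : ∀ a : ZMod 2, a + a + 0 + 0 = 0 + 0 := by decide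
          exact key _
        · rw [if_neg (fun h => ((filt_i0 hij hstar2 p).mp h).elim hA hC),
            if_neg (fun h => ((filt_i2 hij hstar2 p).mp h).elim hA
              (fun h' => h'.elim hB hC)),
            if_neg (fun h => hA ((filt_j0 hij hstar2 p).mp h)),
            if_neg (fun h => hA ((filt_j2 hij hstar2 p).mp h)),
            if_neg hA, if_neg hB]
          simp
  simp only [delta]
  rw [Finset.sum_filter, Finset.sum_filter, Finset.sum_filter, Finset.sum_filter,
    ← Finset.sum_add_distrib, ← Finset.sum_add_distrib, ← Finset.sum_add_distrib,
    Finset.sum_congr rfl (fun p _ => hpoint p), Finset.sum_add_distrib,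
    ← Finset.sum_filter, telescope X hij hstar2 (i : ℕ) le_rfl,
    Finset.sum_ite_eq' Finset.univ i (fun _ => eps X (zltN s ↑i))]
  rw [if_pos (Finset.mem_univ i), zltN_zero]
  have key : ∀ a b : ZMod 2, a + b + a = b := by decide
  exact key _ _

end Aux6
/-- For a strong-inductive cubical set `S` and an `S`-shaped pre-complex `(C, d)`, there is
a sign assignment `δ` on the edges of `S` such that every square of the `δ`-deformation
`C^δ` anticommutes. -/
theorem statement2 {R : Type*} [Ring R] {n : ℕ} (S : Finset (Face n))
    (hS : StrongInductive S) (X : SShape R n) (hX : IsPreComplex S X) :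
    ∃ δ : Face n → ZMod 2, ∀ s ∈ S, fdim s = 2 → ∀ i j : Fin n, i ≠ j → s i = 1 → s j = 1 →
      sqCompSigned X δ s i j = -sqCompSigned X δ s j i := by
  classical
  refine ⟨delta X, fun s hs h2 i j hij hi hj => ?_⟩
  have hstar2 : ∀ q, s q = 1 ↔ q = i ∨ q = j := by
    intro q
    have hcard : fdim s = ({i, j} : Finset (Fin n)).card := by
      rw [Finset.card_insert_of_notMem (by simp [hij]), Finset.card_singleton]; exact h2
    have hmem : ∀ q ∈ ({i, j} : Finset (Fin n)), s q = 1 := by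
      intro q hq
      rcases Finset.mem_insert.mp hq with rfl | hq
      · exact hi
      · rw [Finset.mem_singleton.mp hq]; exact hj
    rw [star_iff hcard hmem q]; simp
  have hfr := faceRel hX hs h2 hij hi hj
  simp only [sqCompSigned]
  rw [sq_edge_a hij hstar2, sq_edge_b hij hstar2, sq_edge_c hij hstar2, sq_edge_d hij hstar2,
    signed_comp_left, signed_comp_left, comp_signed, comp_signed, signed_signed,
    signed_signed]
  have hsq_i : (X.d (corner0 s i 2) (vset s 2)).comp (X.d (vset s 0) (corner0 s i 2))
      = sqComp X s i := rfl
  have hsq_j : (X.d (corner0 s j 2) (vset s 2)).comp (X.d (vset s 0) (corner0 s j 2))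
      = sqComp X s j := rfl
  rw [hsq_i, hsq_j, hfr, signed_signed, neg_signed]
  apply signed_congr
  rcases lt_or_gt_of_ne hij with hlt | hgt
  · have hσ := sigma_eq hS hX hs h2 (Fin.lt_def.mp hlt) hi hj
    have key : ∀ A B C D E : ZMod 2, A + B + C + D = E → B + C + (E + 1) = D + A + 1 := by
      decide
    exact key _ _ _ _ _ hσ
  · have hσ := sigma_eq hS hX hs h2 (Fin.lt_def.mp hgt) hj hi
    have key : ∀ A B C D E : ZMod 2, A + B + C + D = E → D + A + (E + 1) = B + C + 1 := by
      decide
    exact key _ _ _ _ _ hσ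
end
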